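/- arXiv:2101.06366 — 3 statements merged into one kernel-verified Lean document; each statement's English description precedes it below -/
import Mathlib

section
/- Let {X_{k,n} : k,n ≥ 1} be a double array of independent random variables, let g : [0,∞) → (0,∞) be non-decreasing, let κ be a positive increasing function on (0,∞), and suppose there exists C > 0 such that for every k,n ≥ 1 and all x > 0, P(X_{k,n}/g(ln(kn)) < x) ≤ exp(−C e^{−κ(x)}). Let a_{m,j} = g(ln(mj)) ψ^{−1}(ln(mj)) and Y⁻_{m,j} = max(a_{m,j} − max_{1 ≤ k ≤ m, 1 ≤ n ≤ j} X_{k,n}, 0). Then for every ε > 0 and all m,j ≥ 1 such that (g(ln(mj))/g(0)) ψ^{−1}(ln(mj)) − ε/g(ln(mj)) > 0, it holds that P(Y⁻_{m,j} > ε) ≤ exp(−C m j exp(−κ((g(ln(mj))/g(0)) ψ^{−1}(ln(mj)) − ε/g(ln(mj))))). -/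
open MeasureTheory Real Filter Set

/-- An Orlicz N-function: continuous, even, convex, vanishing at `0`, monotone
increasing on `[0, ∞)`, with `φ x / x → 0` as `x → 0⁺` and `φ x / x → ∞` as `x → ∞`. -/
structure IsOrliczN (φ : ℝ → ℝ) : Prop where
  continuous : Continuous φ
  even : ∀ x, φ (-x) = φ x
  convexOn : ConvexOn ℝ Set.univ φ
  map_zero : φ 0 = 0
  strictMonoOn : StrictMonoOn φ (Set.Ici 0)
  tendsto_zero : Tendsto (fun x => φ x / x) (nhdsWithin 0 (Set.Ioi 0)) (nhds 0)
  tendsto_atTop : Tendsto (fun x => φ x / x) atTop atTop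

/-- `ψ` is the Young–Fenchel transform of `φ`: `ψ x = sup_{y ∈ ℝ} (x * y - φ y)`. -/
def IsYoungFenchel (φ ψ : ℝ → ℝ) : Prop :=
  ∀ x, IsLUB {z | ∃ y, z = x * y - φ y} (ψ x)

/-- The moment generating function bound `E exp(t X) ≤ exp (φ (a t))` with constant `a > 0`. -/
def PhiMGF (φ : ℝ → ℝ) {Ω : Type*} [MeasurableSpace Ω] (P : Measure Ω) (X : Ω → ℝ)
    (a : ℝ) : Prop :=
  0 < a ∧ ∀ t : ℝ, Integrable (fun ω => Real.exp (t * X ω)) P ∧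
    ∫ ω, Real.exp (t * X ω) ∂P ≤ Real.exp (φ (a * t))

/-- `X` is a `φ`-subgaussian random variable: centered, with an MGF bound. -/
def IsPhiSubGaussian (φ : ℝ → ℝ) {Ω : Type*} [MeasurableSpace Ω] (P : Measure Ω)
    (X : Ω → ℝ) : Prop :=
  Integrable X P ∧ (∫ ω, X ω ∂P) = 0 ∧ ∃ a, PhiMGF φ P X a

/-- The `φ`-subgaussian norm `τ_φ(X)`. -/
noncomputable def tauPhi (φ : ℝ → ℝ) {Ω : Type*} [MeasurableSpace Ω] (P : Measure Ω)
    (X : Ω → ℝ) : ℝ :=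
  sInf {a | PhiMGF φ P X a}

/-- `max_{1 ≤ k ≤ m, 1 ≤ n ≤ j} X_{k,n}(ω)`. -/
noncomputable def runMax {Ω : Type*} (X : ℕ → ℕ → Ω → ℝ) (m j : ℕ) (ω : Ω) : ℝ :=
  sSup {y | ∃ k n, 1 ≤ k ∧ k ≤ m ∧ 1 ≤ n ∧ n ≤ j ∧ y = X k n ω}

/-- Convergence of a double array `b m j` to `l` as `m ∨ j → ∞`. -/
def TendstoMaxIdx (b : ℕ → ℕ → ℝ) (l : ℝ) : Prop :=
  ∀ ε > 0, ∃ N : ℕ, ∀ m j : ℕ, 1 ≤ m → 1 ≤ j → N ≤ max m j → |b m j - l| < ε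

/-- for an independent double array with left-tail bound
`P(X_{k,n}/g(ln(kn)) < x) ≤ exp(-C e^{-κ(x)})`, for every `ε > 0` and all `m, j ≥ 1` with
`(g(ln(mj))/g(0)) ψ⁻¹(ln(mj)) - ε/g(ln(mj)) > 0`, one gets
`P(Y⁻_{m,j} > ε) ≤ exp(-C m j exp(-κ((g(ln(mj))/g(0)) ψ⁻¹(ln(mj)) - ε/g(ln(mj)))))`. -/
theorem prob_neg_part_le
    {Ω : Type*} [MeasurableSpace Ω] (P : Measure Ω) [IsProbabilityMeasure P]
    (φ ψ ψinv g : ℝ → ℝ) (hφ : IsOrliczN φ) (hψ : IsYoungFenchel φ ψ)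
    (hψinv : ∀ x, 0 ≤ x → 0 ≤ ψinv x ∧ ψ (ψinv x) = x)
    (hg_mono : MonotoneOn g (Set.Ici 0)) (hg_pos : ∀ x, 0 ≤ x → 0 < g x)
    (X : ℕ → ℕ → Ω → ℝ)
    (hindep : ProbabilityTheory.iIndepFun
      (fun p : ℕ × ℕ => X p.1 p.2) P)
    (κ : ℝ → ℝ) (hκ_pos : ∀ x, 0 < x → 0 < κ x) (hκ_mono : StrictMonoOn κ (Set.Ioi 0))
    (C : ℝ) (hC : 0 < C)
    (htail : ∀ k n : ℕ, 1 ≤ k → 1 ≤ n → ∀ x : ℝ, 0 < x →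
      P {ω | X k n ω / g (Real.log ((k * n : ℕ) : ℝ)) < x}
        ≤ ENNReal.ofReal (Real.exp (-(C * Real.exp (-κ x))))) :
    ∀ ε : ℝ, 0 < ε → ∀ m j : ℕ, 1 ≤ m → 1 ≤ j →
      0 < g (Real.log ((m * j : ℕ) : ℝ)) / g 0 * ψinv (Real.log ((m * j : ℕ) : ℝ))
          - ε / g (Real.log ((m * j : ℕ) : ℝ)) →
      P {ω | ε < max (g (Real.log ((m * j : ℕ) : ℝ)) * ψinv (Real.log ((m * j : ℕ) : ℝ))
            - runMax X m j ω) 0}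
        ≤ ENNReal.ofReal (Real.exp (-(C * m * j *
            Real.exp (-κ (g (Real.log ((m * j : ℕ) : ℝ)) / g 0
              * ψinv (Real.log ((m * j : ℕ) : ℝ))
                - ε / g (Real.log ((m * j : ℕ) : ℝ))))))) := by
  intro ε hε m j hm hj hx
  set L := Real.log ((m * j : ℕ) : ℝ) with hLdef
  set x := g L / g 0 * ψinv L - ε / g L with hxdef
  have hmj1 : (1 : ℝ) ≤ ((m * j : ℕ) : ℝ) := by
    have : 1 ≤ m * j := Nat.one_le_iff_ne_zero.mpr (by positivity)
    exact_mod_cast this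
  have hL0 : 0 ≤ L := Real.log_nonneg hmj1
  have hg0 : 0 < g 0 := hg_pos 0 le_rfl
  have hgL : 0 < g L := hg_pos L hL0
  have hgL0 : g 0 ≤ g L := hg_mono (Set.mem_Ici.mpr le_rfl) (Set.mem_Ici.mpr hL0) hL0
  have hψ0 : 0 ≤ ψinv L := (hψinv L hL0).1
  set F : Finset (ℕ × ℕ) := Finset.Icc 1 m ×ˢ Finset.Icc 1 j with hFdef
  set s : ℕ × ℕ → Set ℝ := fun p => Set.Iio (x * g (Real.log ((p.1 * p.2 : ℕ) : ℝ))) with hsdef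
  -- facts about indices in F
  have hidx : ∀ p : ℕ × ℕ, p ∈ F → 1 ≤ p.1 ∧ p.1 ≤ m ∧ 1 ≤ p.2 ∧ p.2 ≤ j := by
    intro p hp
    rw [hFdef, Finset.mem_product, Finset.mem_Icc, Finset.mem_Icc] at hp
    exact ⟨hp.1.1, hp.1.2, hp.2.1, hp.2.2⟩
  have hgkn_pos : ∀ p : ℕ × ℕ, p ∈ F → 0 < g (Real.log ((p.1 * p.2 : ℕ) : ℝ)) := by
    intro p hp
    obtain ⟨h1, _, h3, _⟩ := hidx p hp
    have : (1 : ℝ) ≤ ((p.1 * p.2 : ℕ) : ℝ) := by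
      have : 1 ≤ p.1 * p.2 := Nat.one_le_iff_ne_zero.mpr (by positivity)
      exact_mod_cast this
    exact hg_pos _ (Real.log_nonneg this)
  -- independence product formula
  have hmeas : ∀ p ∈ F, MeasurableSet (s p) := fun p _ => measurableSet_Iio
  have hprod := hindep.measure_inter_preimage_eq_mul F hmeas
  -- subset
  have hsub : {ω | ε < max (g L * ψinv L - runMax X m j ω) 0}
      ⊆ ⋂ p ∈ F, (fun p : ℕ × ℕ => X p.1 p.2) p ⁻¹' s p := by
    intro ω hω
    simp only [Set.mem_setOf_eq] at hω
    have hA : ε < g L * ψinv L - runMax X m j ω := by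
      rcases lt_max_iff.mp hω with h | h
      · exact h
      · linarith
    have hrun : runMax X m j ω < g L * ψinv L - ε := by linarith
    simp only [Set.mem_iInter]
    intro p hp
    obtain ⟨h1, h2, h3, h4⟩ := hidx p hp
    have hbdd : BddAbove {y | ∃ k n, 1 ≤ k ∧ k ≤ m ∧ 1 ≤ n ∧ n ≤ j ∧ y = X k n ω} := by
      have heq : {y | ∃ k n, 1 ≤ k ∧ k ≤ m ∧ 1 ≤ n ∧ n ≤ j ∧ y = X k n ω}
          = (fun p : ℕ × ℕ => X p.1 p.2 ω) '' ↑F := by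
        ext y
        constructor
        · rintro ⟨k, n, hk1, hk2, hn1, hn2, rfl⟩
          exact ⟨(k, n), Finset.mem_product.mpr ⟨Finset.mem_Icc.mpr ⟨hk1, hk2⟩, Finset.mem_Icc.mpr ⟨hn1, hn2⟩⟩, rfl⟩
        · rintro ⟨⟨k, n⟩, hkn, rfl⟩
          obtain ⟨a1, a2, a3, a4⟩ := hidx (k, n) hkn
          exact ⟨k, n, a1, a2, a3, a4, rfl⟩
      rw [heq]
      exact (F.finite_toSet.image _).bddAbove
    have hmem : X p.1 p.2 ω ∈ {y | ∃ k n, 1 ≤ k ∧ k ≤ m ∧ 1 ≤ n ∧ n ≤ j ∧ y = X k n ω} :=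
      ⟨p.1, p.2, h1, h2, h3, h4, rfl⟩
    have hle : X p.1 p.2 ω ≤ runMax X m j ω := le_csSup hbdd hmem
    have hXlt : X p.1 p.2 ω < g L * ψinv L - ε := lt_of_le_of_lt hle hrun
    have hkn1 : (1 : ℝ) ≤ ((p.1 * p.2 : ℕ) : ℝ) := by
      have : 1 ≤ p.1 * p.2 := Nat.one_le_iff_ne_zero.mpr (by positivity)
      exact_mod_cast this
    have hLkn0 : 0 ≤ Real.log ((p.1 * p.2 : ℕ) : ℝ) := Real.log_nonneg hkn1
    have hLkn : Real.log ((p.1 * p.2 : ℕ) : ℝ) ≤ L := by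
      rw [hLdef]
      apply Real.log_le_log (by linarith)
      have : p.1 * p.2 ≤ m * j := Nat.mul_le_mul h2 h4
      exact_mod_cast this
    set gkn := g (Real.log ((p.1 * p.2 : ℕ) : ℝ)) with hgkndef
    have hgkn : 0 < gkn := hgkn_pos p hp
    have hle1 : g 0 ≤ gkn := hg_mono (Set.mem_Ici.mpr le_rfl) (Set.mem_Ici.mpr hLkn0) hLkn0
    have hle2 : gkn ≤ g L := hg_mono (Set.mem_Ici.mpr hLkn0) (Set.mem_Ici.mpr hL0) hLkn
    have key : g L * ψinv L - ε ≤ x * gkn := by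
      have e1 : g L * ψinv L * 1 ≤ g L * ψinv L * (gkn / g 0) :=
        mul_le_mul_of_nonneg_left ((one_le_div hg0).mpr hle1) (mul_nonneg hgL.le hψ0)
      have e2 : ε * (gkn / g L) ≤ ε * 1 :=
        mul_le_mul_of_nonneg_left ((div_le_one hgL).mpr hle2) hε.le
      have hring : x * gkn = g L * ψinv L * (gkn / g 0) - ε * (gkn / g L) := by
        rw [hxdef]; field_simp
      rw [hring]
      linarith
    exact Set.mem_Iio.mpr (lt_of_lt_of_le hXlt key)
  -- bound each factor
  have hfac : ∀ p ∈ F, P ((fun p : ℕ × ℕ => X p.1 p.2) p ⁻¹' s p)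
      ≤ ENNReal.ofReal (Real.exp (-(C * Real.exp (-κ x)))) := by
    intro p hp
    obtain ⟨h1, h2, h3, h4⟩ := hidx p hp
    have hgkn : 0 < g (Real.log ((p.1 * p.2 : ℕ) : ℝ)) := hgkn_pos p hp
    have hset : (fun p : ℕ × ℕ => X p.1 p.2) p ⁻¹' s p
        = {ω | X p.1 p.2 ω / g (Real.log ((p.1 * p.2 : ℕ) : ℝ)) < x} := by
      ext ω
      simp only [hsdef, Set.mem_preimage, Set.mem_Iio, Set.mem_setOf_eq, div_lt_iff₀ hgkn]
    rw [hset]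
    exact htail p.1 p.2 h1 h3 x hx
  have hcard : F.card = m * j := by
    rw [hFdef, Finset.card_product, Nat.card_Icc, Nat.card_Icc]
    simp
  calc P {ω | ε < max (g L * ψinv L - runMax X m j ω) 0}
      ≤ P (⋂ p ∈ F, (fun p : ℕ × ℕ => X p.1 p.2) p ⁻¹' s p) := measure_mono hsub
    _ = ∏ p ∈ F, P ((fun p : ℕ × ℕ => X p.1 p.2) p ⁻¹' s p) := hprod
    _ ≤ ∏ _p ∈ F, ENNReal.ofReal (Real.exp (-(C * Real.exp (-κ x)))) :=
        Finset.prod_le_prod' hfac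
    _ = ENNReal.ofReal (Real.exp (-(C * Real.exp (-κ x)))) ^ (m * j) := by
        rw [Finset.prod_const, hcard]
    _ = ENNReal.ofReal (Real.exp (-(C * Real.exp (-κ x))) ^ (m * j)) := by
        rw [ENNReal.ofReal_pow (Real.exp_nonneg _)]
    _ = ENNReal.ofReal (Real.exp (-(C * m * j * Real.exp (-κ x)))) := by
        rw [← Real.exp_nat_mul]
        congr 1
        push_cast
        ring
end

section
/- Let {X_{k,n} : k,n ≥ 1} be a double array of independent standard Gaussian random variables (mean 0, variance 1). Then max_{1 ≤ k ≤ m, 1 ≤ n ≤ j} X_{k,n} − √(2 ln(mj)) → 0 almost surely as m ∨ j → ∞. -/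
open MeasureTheory Real Filter Set
open ProbabilityTheory
open scoped ENNReal NNReal

lemma pdf01 (x : ℝ) : gaussianPDFReal 0 1 x = (Real.sqrt (2*π))⁻¹ * rexp (-x^2/2) := by
  simp [gaussianPDFReal]

lemma sqrt2pi_ge_one : 1 ≤ Real.sqrt (2*π) := by
  rw [show (1:ℝ) = Real.sqrt 1 by simp]
  exact Real.sqrt_le_sqrt (by nlinarith [Real.pi_gt_three])

lemma exp_sub_integrableOn (c : ℝ) : IntegrableOn (fun x => rexp (c - x)) (Ioi c) := by
  have h : IntegrableOn (fun x : ℝ => rexp (-1 * x)) (Ioi c) :=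
    exp_neg_integrableOn_Ioi c zero_lt_one
  have h2 : IntegrableOn (fun x : ℝ => rexp c * rexp (-1*x)) (Ioi c) := h.const_mul _
  apply h2.congr_fun ?_ measurableSet_Ioi
  intro x _; show rexp c * rexp (-1*x) = rexp (c - x); rw [← Real.exp_add]; ring_nf

lemma integral_exp_sub (c : ℝ) : ∫ x in Ioi c, rexp (c - x) = 1 := by
  have : ∀ x : ℝ, rexp (c - x) = rexp c * rexp (-x) := by
    intro x; rw [← Real.exp_add]; ring_nf
  simp_rw [this, integral_const_mul, integral_exp_neg_Ioi, ← Real.exp_add]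
  simp

lemma gauss_tail_upper {c : ℝ} (hc : 1 ≤ c) :
    gaussianReal 0 1 (Ioi c) ≤ ENNReal.ofReal (rexp (-c^2/2)) := by
  rw [gaussianReal_apply_eq_integral 0 one_ne_zero]
  apply ENNReal.ofReal_le_ofReal
  have hint : IntegrableOn (gaussianPDFReal 0 1) (Ioi c) :=
    (integrable_gaussianPDFReal 0 1).integrableOn
  have hgint : IntegrableOn (fun x => rexp (-c^2/2) * rexp (c - x)) (Ioi c) :=
    (exp_sub_integrableOn c).const_mul _
  calc ∫ x in Ioi c, gaussianPDFReal 0 1 x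
      ≤ ∫ x in Ioi c, rexp (-c^2/2) * rexp (c - x) := by
        apply setIntegral_mono_on hint hgint measurableSet_Ioi
        intro x hx
        rw [pdf01]
        have h1 : (Real.sqrt (2*π))⁻¹ ≤ 1 := by
          rw [inv_le_one_iff₀]; right; exact sqrt2pi_ge_one
        have h2 : rexp (-x^2/2) ≤ rexp (-c^2/2) * rexp (c - x) := by
          rw [← Real.exp_add]
          apply Real.exp_le_exp.2
          have := hx.out.le
          nlinarith
        calc (Real.sqrt (2*π))⁻¹ * rexp (-x^2/2) ≤ 1 * rexp (-x^2/2) :=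
              mul_le_mul_of_nonneg_right h1 (Real.exp_nonneg _)
          _ = rexp (-x^2/2) := one_mul _
          _ ≤ _ := h2
    _ = rexp (-c^2/2) := by rw [integral_const_mul, integral_exp_sub, mul_one]



lemma sqrt2pi_le_three : Real.sqrt (2*π) ≤ 3 := by
  rw [show (3:ℝ) = Real.sqrt 9 by rw [show (9:ℝ) = 3^2 by norm_num, Real.sqrt_sq]; norm_num]
  exact Real.sqrt_le_sqrt (by nlinarith [Real.pi_lt_d2])

lemma gauss_tail_lower {c : ℝ} (hc : 1 ≤ c) :
    ENNReal.ofReal (rexp (-c^2/2) / (30*c)) ≤ gaussianReal 0 1 (Ioi c) := by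
  rw [gaussianReal_apply_eq_integral 0 one_ne_zero]
  apply ENNReal.ofReal_le_ofReal
  have hc0 : (0:ℝ) < c := lt_of_lt_of_le zero_lt_one hc
  have hint : IntegrableOn (gaussianPDFReal 0 1) (Ioi c) :=
    (integrable_gaussianPDFReal 0 1).integrableOn
  have hsub : Ioc c (c + c⁻¹) ⊆ Ioi c := Ioc_subset_Ioi_self
  have hint2 : IntegrableOn (gaussianPDFReal 0 1) (Ioc c (c + c⁻¹)) := hint.mono_set hsub
  have hpi := Real.pi_pos
  have hlb : ∀ x ∈ Ioc c (c + c⁻¹), (Real.sqrt (2*π))⁻¹ * rexp (-(c+c⁻¹)^2/2) ≤ gaussianPDFReal 0 1 x := by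
    intro x hx
    rw [pdf01]
    apply mul_le_mul_of_nonneg_left _ (by positivity)
    apply Real.exp_le_exp.2
    have h1 := hx.1.le
    have h2 := hx.2
    have hx0 : 0 < x := lt_trans hc0 hx.1
    have : x^2 ≤ (c+c⁻¹)^2 := by nlinarith [inv_nonneg.2 hc0.le]
    linarith
  have hmeas : MeasurableSet (Ioc c (c + c⁻¹)) := measurableSet_Ioc
  have hvol : (volume (Ioc c (c + c⁻¹))).toReal = c⁻¹ := by
    rw [Real.volume_Ioc, ENNReal.toReal_ofReal (by rw [add_sub_cancel_left]; positivity)]; ring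
  have hgl := setIntegral_ge_of_const_le hmeas
    (by rw [Real.volume_Ioc]; exact ENNReal.ofReal_ne_top) hlb hint2
  have key : rexp (-c^2/2) / (30*c) ≤ ∫ x in Ioc c (c + c⁻¹), gaussianPDFReal 0 1 x := by
    refine le_trans ?_ hgl
    rw [measureReal_def, hvol, smul_eq_mul, mul_comm c⁻¹]
    have e1 : rexp (-(c+c⁻¹)^2/2) = rexp (-c^2/2) * rexp (-(1 + c⁻¹^2/2)) := by
      rw [← Real.exp_add]
      congr 1
      have : c ≠ 0 := hc0.ne'
      field_simp
      ring
    rw [e1]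
    have h4 : (3:ℝ)⁻¹ ≤ (Real.sqrt (2*π))⁻¹ := inv_anti₀ (Real.sqrt_pos.2 (by positivity)) sqrt2pi_le_three
    have he2 : rexp 2 ≤ 10 := by
      have h := Real.exp_one_lt_d9
      have e : rexp 2 = rexp 1 * rexp 1 := by rw [← Real.exp_add]; norm_num
      nlinarith [Real.exp_pos 1]
    have h5 : (10:ℝ)⁻¹ ≤ rexp (-(3/2:ℝ)) := by
      rw [Real.exp_neg]
      exact inv_anti₀ (Real.exp_pos _) (le_trans (Real.exp_le_exp.2 (by norm_num)) he2)
    have h3 : rexp (-(3/2:ℝ)) ≤ rexp (-(1 + c⁻¹^2/2)) := by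
      apply Real.exp_le_exp.2
      have : c⁻¹ ≤ 1 := by rw [inv_le_one_iff₀]; right; exact hc
      nlinarith [inv_nonneg.2 hc0.le]
    have hK : (30:ℝ)⁻¹ ≤ (Real.sqrt (2*π))⁻¹ * rexp (-(1 + c⁻¹^2/2)) := by
      calc (30:ℝ)⁻¹ = 3⁻¹ * 10⁻¹ := by norm_num
        _ ≤ (Real.sqrt (2*π))⁻¹ * rexp (-(1 + c⁻¹^2/2)) :=
            mul_le_mul h4 (le_trans h5 h3) (by norm_num) (by positivity)
    have expand : (Real.sqrt (2*π))⁻¹ * (rexp (-c^2/2) * rexp (-(1+c⁻¹^2/2))) * c⁻¹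
        = ((Real.sqrt (2*π))⁻¹ * rexp (-(1+c⁻¹^2/2))) * (rexp (-c^2/2) * c⁻¹) := by ring
    rw [expand, show rexp (-c^2/2)/(30*c) = 30⁻¹ * (rexp (-c^2/2) * c⁻¹) by
      field_simp]
    exact mul_le_mul_of_nonneg_right hK (by positivity)
  calc rexp (-c^2/2) / (30*c) ≤ ∫ x in Ioc c (c + c⁻¹), gaussianPDFReal 0 1 x := key
    _ ≤ ∫ x in Ioi c, gaussianPDFReal 0 1 x := by
        apply setIntegral_mono_set hint (ae_of_all _ (gaussianPDFReal_nonneg 0 1)) hsub.eventuallyLE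


lemma borel_cantelli' {ι Ω : Type*} [MeasurableSpace Ω] [Countable ι] (P : Measure Ω) (s : ι → Set Ω)
    (h : ∑' i, P (s i) ≠ ⊤) : ∀ᵐ ω ∂P, {i | ω ∈ s i}.Finite := by
  rw [ae_iff]
  have key : ∀ F : Finset ι, P {ω | ¬ ({i | ω ∈ s i}).Finite} ≤ ∑' i : {i // i ∉ F}, P (s (i : ι)) := by
    intro F
    refine le_trans (measure_mono ?_) (measure_iUnion_le _)
    intro ω hω
    simp only [mem_setOf_eq] at hω
    by_contra hcon
    apply hω
    apply Set.Finite.subset F.finite_toSet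
    intro i hi
    by_contra hiF
    exact hcon (mem_iUnion.2 ⟨⟨i, hiF⟩, hi⟩)
  have ht := ENNReal.tendsto_tsum_compl_atTop_zero h
  have := ge_of_tendsto' ht key
  exact le_antisymm this zero_le


lemma summable_inv_sq_add_one : Summable (fun n : ℕ => 1/((n:ℝ)+1)^2) := by
  have := (summable_nat_add_iff 1).mpr <| Real.summable_one_div_nat_pow.mpr one_lt_two
  apply this.congr
  intro n; push_cast; ring

lemma exp_sqrt_bound {c : ℝ} (hc : 0 < c) (n : ℕ) :
    rexp (-c * Real.sqrt n) ≤ (1 + 12500/c^5) * (1/((n:ℝ)+1)^2) := by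
  have hK0 : (0:ℝ) < 12500/c^5 := by positivity
  rcases Nat.eq_zero_or_pos n with h0 | h1
  · subst h0
    simp only [Nat.cast_zero, Real.sqrt_zero, mul_zero, Real.exp_zero]
    rw [show ((0:ℝ)+1)^2 = 1 by norm_num]
    simp only [one_div, inv_one, mul_one]
    linarith
  · have hn1 : (1:ℝ) ≤ n := by exact_mod_cast h1
    have hn0 : (0:ℝ) < n := by linarith
    have hgrow : c^5 * (n:ℝ)^2 / 3125 ≤ rexp (c * Real.sqrt n) := by
      have h1' : c * Real.sqrt n / 5 ≤ rexp (c * Real.sqrt n / 5) := by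
        linarith [Real.add_one_le_exp (c * Real.sqrt n / 5)]
      have h2' : (c * Real.sqrt n / 5)^5 ≤ rexp (c * Real.sqrt n / 5)^5 :=
        pow_le_pow_left₀ (by positivity) h1' 5
      rw [← Real.exp_nat_mul] at h2'
      have e : ((5:ℕ):ℝ) * (c * Real.sqrt n / 5) = c * Real.sqrt n := by push_cast; ring
      rw [e] at h2'
      refine le_trans ?_ h2'
      have hsq : Real.sqrt n ^ 2 = (n:ℝ) := Real.sq_sqrt (by positivity)
      have hs1 : (1:ℝ) ≤ Real.sqrt n := by
        rw [show (1:ℝ) = Real.sqrt 1 by simp]; exact Real.sqrt_le_sqrt hn1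
      have h5 : Real.sqrt n ^ 5 = (n:ℝ)^2 * Real.sqrt n := by
        rw [show 5 = 2 * 2 + 1 by norm_num, pow_succ, pow_mul, hsq]
      have e2 : (c * Real.sqrt n / 5)^5 = c^5 * ((n:ℝ)^2 * Real.sqrt n) / 3125 := by
        rw [div_pow, mul_pow, h5]; norm_num
      rw [e2]
      have : c^5 * (n:ℝ)^2 * 1 ≤ c^5 * ((n:ℝ)^2 * Real.sqrt n) := by
        rw [mul_assoc]
        apply mul_le_mul_of_nonneg_left _ (by positivity)
        apply mul_le_mul_of_nonneg_left hs1 (by positivity)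
      linarith
    have hpos : (0:ℝ) < c^5 * (n:ℝ)^2 / 3125 := by positivity
    have hinv : rexp (-c * Real.sqrt n) ≤ 3125 / (c^5 * (n:ℝ)^2) := by
      rw [neg_mul, Real.exp_neg]
      calc (rexp (c * Real.sqrt n))⁻¹ ≤ (c^5 * (n:ℝ)^2 / 3125)⁻¹ := inv_anti₀ hpos hgrow
        _ = 3125 / (c^5 * (n:ℝ)^2) := by rw [inv_div]
    refine le_trans hinv (le_trans ?_ (by
      apply mul_le_mul_of_nonneg_right _ (by positivity)
      linarith : (12500/c^5) * (1/((n:ℝ)+1)^2) ≤ (1 + 12500/c^5) * (1/((n:ℝ)+1)^2)))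
    rw [show (12500/c^5) * (1/((n:ℝ)+1)^2) = 12500 / (c^5 * ((n:ℝ)+1)^2) by
      rw [div_mul_div_comm]; ring_nf]
    rw [div_le_div_iff₀ (by positivity) (by positivity)]
    have h4 : ((n:ℝ)+1)^2 ≤ 4*(n:ℝ)^2 := by nlinarith
    nlinarith [pow_pos hc 5, h4]

lemma summable_exp_sqrt {c : ℝ} (hc : 0 < c) : Summable (fun n : ℕ => rexp (-c * Real.sqrt n)) :=
  Summable.of_nonneg_of_le (fun n => (Real.exp_pos _).le) (exp_sqrt_bound hc)
    (summable_inv_sq_add_one.mul_left _)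

lemma summable_exp_sqrt_pair {c : ℝ} (hc : 0 < c) :
    Summable (fun p : ℕ × ℕ => rexp (-c * Real.sqrt ((p.1:ℝ) + p.2))) := by
  have h2 : 0 < c/2 := by linarith
  have hs := (summable_exp_sqrt h2).mul_of_nonneg (summable_exp_sqrt h2)
    (fun n => (Real.exp_pos _).le) (fun n => (Real.exp_pos _).le)
  apply Summable.of_nonneg_of_le (fun p => (Real.exp_pos _).le) _ hs
  rintro ⟨a, b⟩
  simp only
  rw [← Real.exp_add]
  apply Real.exp_le_exp.2
  have ha : (0:ℝ) ≤ a := Nat.cast_nonneg a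
  have hb : (0:ℝ) ≤ b := Nat.cast_nonneg b
  have h1 : Real.sqrt a ≤ Real.sqrt ((a:ℝ)+b) := Real.sqrt_le_sqrt (by linarith)
  have h2' : Real.sqrt b ≤ Real.sqrt ((a:ℝ)+b) := Real.sqrt_le_sqrt (by linarith)
  nlinarith [hc.le]


lemma log_two_ge : (0.69:ℝ) ≤ Real.log 2 := by
  linarith [Real.log_two_gt_d9]

lemma block_bound {ε : ℝ} (hε : 0 < ε) (a b : ℕ) (hab : 1 ≤ a + b) :
    ((2:ℝ)^(a+1) * 2^(b+1)) * rexp (-(Real.sqrt (2 * Real.log ((2:ℝ)^(a+b))) + ε)^2/2)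
      ≤ 4 * rexp (-ε * Real.sqrt ((a:ℝ)+b)) := by
  set n := a + b with hn
  have hl2 : (0:ℝ) < Real.log 2 := by linarith [log_two_ge]
  have hlog : Real.log ((2:ℝ)^n) = n * Real.log 2 := by rw [Real.log_pow]
  set s := Real.sqrt (2 * Real.log ((2:ℝ)^n)) with hs
  have hsnn : 0 ≤ s := Real.sqrt_nonneg _
  have hs2 : s^2 = 2 * (n * Real.log 2) := by
    rw [hs, Real.sq_sqrt (by rw [hlog]; positivity), hlog]
  have h1 : rexp (-(s+ε)^2/2) ≤ rexp (-(n * Real.log 2)) * rexp (-ε * s) := by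
    rw [← Real.exp_add]
    apply Real.exp_le_exp.2
    nlinarith [sq_nonneg ε]
  have h2 : rexp (-((n:ℝ) * Real.log 2)) = ((2:ℝ)^n)⁻¹ := by
    rw [Real.exp_neg]
    congr 1
    rw [Real.exp_nat_mul, Real.exp_log (by norm_num)]
  have h3 : rexp (-ε * s) ≤ rexp (-ε * Real.sqrt ((a:ℝ)+b)) := by
    apply Real.exp_le_exp.2
    have hcast : ((n:ℕ):ℝ) = (a:ℝ) + b := by push_cast [hn]; ring
    have : Real.sqrt ((a:ℝ)+b) ≤ s := by
      rw [hs, hlog, ← hcast]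
      apply Real.sqrt_le_sqrt
      have hn1 : (1:ℝ) ≤ (n:ℝ) := by exact_mod_cast hab
      nlinarith [log_two_ge]
    nlinarith
  have hpow : ((2:ℝ)^(a+1) * 2^(b+1)) = 4 * 2^n := by
    rw [hn]; ring
  calc ((2:ℝ)^(a+1) * 2^(b+1)) * rexp (-(s+ε)^2/2)
      ≤ (4 * 2^n) * (rexp (-((n:ℝ) * Real.log 2)) * rexp (-ε * s)) := by
        rw [hpow]
        apply mul_le_mul_of_nonneg_left (le_trans h1 ?_) (by positivity)
        · apply mul_le_mul_of_nonneg_right _ (Real.exp_nonneg _)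
          apply Real.exp_le_exp.2
          push_cast
          linarith
    _ = 4 * rexp (-ε * s) := by rw [h2]; field_simp
    _ ≤ 4 * rexp (-ε * Real.sqrt ((a:ℝ)+b)) := by linarith


lemma exp_bound_lower {ε : ℝ} (hε : 0 < ε) : ∃ N₀ : ℕ, 2 ≤ N₀ ∧ ∀ N : ℕ, N₀ ≤ N →
    1 ≤ Real.sqrt (2 * Real.log N) - ε ∧
    rexp (-((N:ℝ) * (rexp (-(Real.sqrt (2 * Real.log N) - ε)^2/2)
      / (30 * (Real.sqrt (2 * Real.log N) - ε))))) ≤ 1/(N:ℝ)^2 := by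
  set T₀ : ℝ := max (1+ε) (Real.sqrt (30 * rexp (ε^2/2) * (5/ε)^5)) with hT
  have hT0 : 0 < T₀ := lt_of_lt_of_le (by linarith) (le_max_left _ _)
  have hkey : ∀ t : ℝ, T₀ ≤ t → 30 * rexp (ε^2/2) * t^3 ≤ rexp (ε*t) := by
    intro t ht
    have ht0 : 0 < t := lt_of_lt_of_le hT0 ht
    have h1 : (ε*t/5)^5 ≤ rexp (ε*t) := by
      have ha : ε*t/5 ≤ rexp (ε*t/5) := by linarith [Real.add_one_le_exp (ε*t/5)]
      have hb : (ε*t/5)^5 ≤ rexp (ε*t/5)^5 := pow_le_pow_left₀ (by positivity) ha 5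
      rwa [← Real.exp_nat_mul, show ((5:ℕ):ℝ) * (ε*t/5) = ε*t by push_cast; ring] at hb
    refine le_trans ?_ h1
    have ht2 : 30 * rexp (ε^2/2) * (5/ε)^5 ≤ t^2 := by
      have : Real.sqrt (30 * rexp (ε^2/2) * (5/ε)^5) ≤ t := le_trans (le_max_right _ _) ht
      have h2 := Real.sq_sqrt (show (0:ℝ) ≤ 30 * rexp (ε^2/2) * (5/ε)^5 by positivity)
      nlinarith [Real.sqrt_nonneg (30 * rexp (ε^2/2) * (5/ε)^5)]
    have he : (ε*t/5)^5 = (ε/5)^5 * t^3 * t^2 := by ring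
    rw [he]
    have h3 : 30 * rexp (ε^2/2) * t^3 = ((ε/5)^5 * t^3) * (30 * rexp (ε^2/2) * (5/ε)^5) := by
      field_simp
    rw [h3]
    exact mul_le_mul_of_nonneg_left ht2 (by positivity)
  refine ⟨⌈rexp (T₀^2/2)⌉₊ + 2, by omega, fun N hN => ?_⟩
  have hN1 : (1:ℝ) ≤ N := by
    have : 2 ≤ N := by omega
    exact_mod_cast Nat.one_le_iff_ne_zero.2 (by omega)
  have hNr : rexp (T₀^2/2) ≤ (N:ℝ) := by
    calc rexp (T₀^2/2) ≤ (⌈rexp (T₀^2/2)⌉₊ : ℝ) := Nat.le_ceil _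
      _ ≤ (N:ℝ) := by exact_mod_cast le_trans (by omega) hN
  have hlogN : T₀^2/2 ≤ Real.log N := by
    have := Real.log_le_log (Real.exp_pos _) hNr
    rwa [Real.log_exp] at this
  have hlogpos : 0 < Real.log N := lt_of_lt_of_le (by positivity) hlogN
  set t := Real.sqrt (2 * Real.log N) with htdef
  have ht2 : t^2 = 2 * Real.log N := Real.sq_sqrt (by positivity)
  have htT : T₀ ≤ t := by
    rw [htdef, show T₀ = Real.sqrt (T₀^2) by rw [Real.sqrt_sq hT0.le]]
    apply Real.sqrt_le_sqrt
    linarith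
  have ht1ε : 1 + ε ≤ t := le_trans (le_max_left _ _) htT
  have hc1 : 1 ≤ t - ε := by linarith
  refine ⟨hc1, ?_⟩
  set c := t - ε with hcdef
  have hc0 : 0 < c := by linarith
  have ht0 : 0 < t := by linarith
  -- N * q ≥ 2 log N
  have hNe : (N:ℝ) * rexp (-c^2/2) = rexp (ε*t - ε^2/2) := by
    have hexp : -c^2/2 = -Real.log N + (ε*t - ε^2/2) := by
      rw [hcdef]
      have : t^2/2 = Real.log N := by linarith
      ring_nf
      nlinarith [ht2]
    rw [hexp, Real.exp_add, Real.exp_neg, Real.exp_log (by linarith)]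
    field_simp
  have hq : 2 * Real.log N ≤ (N:ℝ) * (rexp (-c^2/2) / (30 * c)) := by
    have hkt := hkey t htT
    have e1 : (N:ℝ) * (rexp (-c^2/2) / (30 * c)) = rexp (ε*t - ε^2/2) / (30 * c) := by
      rw [← hNe]; ring
    rw [e1]
    have e2 : rexp (ε*t - ε^2/2) = rexp (ε*t) / rexp (ε^2/2) := by
      rw [Real.exp_sub]
    rw [e2]
    rw [div_div]
    rw [le_div_iff₀ (by positivity)]
    calc 2 * Real.log N * (rexp (ε^2/2) * (30*c)) = (30 * rexp (ε^2/2) * t^2) * c := by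
          rw [← ht2]; ring
      _ ≤ (30 * rexp (ε^2/2) * t^2) * t := by
          apply mul_le_mul_of_nonneg_left (by linarith) (by positivity)
      _ = 30 * rexp (ε^2/2) * t^3 := by ring
      _ ≤ rexp (ε*t) := hkt
  calc rexp (-((N:ℝ) * (rexp (-c^2/2) / (30 * c)))) ≤ rexp (-(2 * Real.log N)) := by
        apply Real.exp_le_exp.2; linarith
    _ = 1/(N:ℝ)^2 := by
        rw [show -(2 * Real.log N) = Real.log (((N:ℝ)^2)⁻¹) by
          rw [Real.log_inv, Real.log_pow]; push_cast; ring]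
        rw [Real.exp_log (by positivity)]
        rw [one_div]


lemma gauss_cdf_le {c : ℝ} (hc : 1 ≤ c) :
    gaussianReal 0 1 (Iic c) ≤ ENNReal.ofReal (rexp (-(rexp (-c^2/2) / (30*c)))) := by
  set q := rexp (-c^2/2) / (30*c) with hq
  have hq0 : 0 ≤ q := by rw [hq]; positivity
  have hsum : gaussianReal 0 1 (Iic c) + gaussianReal 0 1 (Ioi c) = 1 := by
    rw [← compl_Iic]
    exact prob_add_prob_compl measurableSet_Iic
  have heq : gaussianReal 0 1 (Iic c) = 1 - gaussianReal 0 1 (Ioi c) :=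
    ENNReal.eq_sub_of_add_eq (measure_ne_top _ _) hsum
  rw [heq]
  calc 1 - gaussianReal 0 1 (Ioi c) ≤ 1 - ENNReal.ofReal q :=
        tsub_le_tsub_left (gauss_tail_lower hc) 1
    _ = ENNReal.ofReal (1 - q) := by
        rw [ENNReal.ofReal_sub 1 hq0, ENNReal.ofReal_one]
    _ ≤ ENNReal.ofReal (rexp (-q)) := by
        apply ENNReal.ofReal_le_ofReal
        linarith [Real.add_one_le_exp (-q)]

section
variable {Ω : Type*} [MeasurableSpace Ω] (P : Measure Ω) [IsProbabilityMeasure P]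
  (X : ℕ → ℕ → Ω → ℝ)

lemma prob_map (hmeas : ∀ k n : ℕ, Measurable (X k n))
    (hgauss : ∀ k n : ℕ, 1 ≤ k → 1 ≤ n →
      Measure.map (X k n) P = ProbabilityTheory.gaussianReal 0 1)
    {k n : ℕ} (hk : 1 ≤ k) (hn : 1 ≤ n) {s : Set ℝ} (hs : MeasurableSet s) :
    P (X k n ⁻¹' s) = gaussianReal 0 1 s := by
  rw [← hgauss k n hk hn, Measure.map_apply (hmeas k n) hs]

lemma lower_prob
    (hmeas : ∀ k n : ℕ, Measurable (X k n))
    (hgauss : ∀ k n : ℕ, 1 ≤ k → 1 ≤ n →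
      Measure.map (X k n) P = ProbabilityTheory.gaussianReal 0 1)
    (hindep : ProbabilityTheory.iIndepFun
      (fun p : ℕ × ℕ => X p.1 p.2) P)
    {m j : ℕ} (hm : 1 ≤ m) (hj : 1 ≤ j) {c : ℝ} (hc : 1 ≤ c) :
    P {ω | ∀ k n, 1 ≤ k → k ≤ m → 1 ≤ n → n ≤ j → X k n ω ≤ c}
      ≤ ENNReal.ofReal (rexp (-((m*j : ℕ) * (rexp (-c^2/2) / (30*c))))) := by
  set q := rexp (-c^2/2) / (30*c) with hqdef
  set S : Finset (ℕ × ℕ) := Finset.Icc 1 m ×ˢ Finset.Icc 1 j with hS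
  have hset : {ω | ∀ k n, 1 ≤ k → k ≤ m → 1 ≤ n → n ≤ j → X k n ω ≤ c}
      = ⋂ p ∈ S, (fun ω => X p.1 p.2 ω) ⁻¹' Iic c := by
    ext ω
    simp only [mem_setOf_eq, mem_iInter, mem_preimage, mem_Iic, hS, Finset.mem_product,
      Finset.mem_Icc]
    constructor
    · rintro h ⟨k, n⟩ ⟨⟨h1, h2⟩, h3, h4⟩
      exact h k n h1 h2 h3 h4
    · intro h k n h1 h2 h3 h4
      exact h (k, n) ⟨⟨h1, h2⟩, h3, h4⟩
  rw [hset]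
  have hprod := hindep.meas_biInter (S := S)
    (s := fun p => (fun ω => X p.1 p.2 ω) ⁻¹' Iic c)
    (fun p _ => ⟨Iic c, measurableSet_Iic, rfl⟩)
  rw [hprod]
  have hcard : S.card = m * j := by
    rw [hS, Finset.card_product, Nat.card_Icc, Nat.card_Icc]
    simp
  calc ∏ p ∈ S, P ((fun ω => X p.1 p.2 ω) ⁻¹' Iic c)
      ≤ ∏ _p ∈ S, ENNReal.ofReal (rexp (-q)) := by
        apply Finset.prod_le_prod'
        intro p hp
        rw [hS, Finset.mem_product, Finset.mem_Icc, Finset.mem_Icc] at hp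
        rw [prob_map P X hmeas hgauss hp.1.1 hp.2.1 measurableSet_Iic]
        exact gauss_cdf_le hc
    _ = ENNReal.ofReal (rexp (-q)) ^ (m * j) := by rw [Finset.prod_const, hcard]
    _ = ENNReal.ofReal (rexp (-((m*j : ℕ) * q))) := by
        rw [← ENNReal.ofReal_pow (Real.exp_nonneg _), ← Real.exp_nat_mul]
        congr 1
        push_cast
        ring
end



open MeasureTheory Real Filter Set

lemma runMax_set_finite {Ω : Type*} (X : ℕ → ℕ → Ω → ℝ) (m j : ℕ) (ω : Ω) :
    {y | ∃ k n, 1 ≤ k ∧ k ≤ m ∧ 1 ≤ n ∧ n ≤ j ∧ y = X k n ω}.Finite := by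
  apply Set.Finite.subset (Set.Finite.image (fun p : ℕ × ℕ => X p.1 p.2 ω)
    ((Set.finite_Icc 1 m).prod (Set.finite_Icc 1 j)))
  rintro y ⟨k, n, h1, h2, h3, h4, rfl⟩
  exact ⟨(k, n), ⟨⟨h1, h2⟩, ⟨h3, h4⟩⟩, rfl⟩

lemma le_runMax {Ω : Type*} (X : ℕ → ℕ → Ω → ℝ) {m j k n : ℕ} (ω : Ω)
    (h1 : 1 ≤ k) (h2 : k ≤ m) (h3 : 1 ≤ n) (h4 : n ≤ j) :
    X k n ω ≤ runMax X m j ω :=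
  le_csSup (runMax_set_finite X m j ω).bddAbove ⟨k, n, h1, h2, h3, h4, rfl⟩

lemma runMax_le_iff {Ω : Type*} (X : ℕ → ℕ → Ω → ℝ) {m j : ℕ} (ω : Ω) (hm : 1 ≤ m)
    (hj : 1 ≤ j) {c : ℝ} :
    runMax X m j ω ≤ c ↔ ∀ k n, 1 ≤ k → k ≤ m → 1 ≤ n → n ≤ j → X k n ω ≤ c := by
  constructor
  · intro h k n h1 h2 h3 h4
    exact le_trans (le_runMax X ω h1 h2 h3 h4) h
  · intro h
    refine csSup_le ⟨X 1 1 ω, 1, 1, le_refl _, hm, le_refl _, hj, rfl⟩ ?_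
    rintro y ⟨k, n, h1, h2, h3, h4, rfl⟩
    exact h k n h1 h2 h3 h4


section
variable {Ω : Type*} [MeasurableSpace Ω] (P : Measure Ω) [IsProbabilityMeasure P]
  (X : ℕ → ℕ → Ω → ℝ)

lemma as_upper
    (hmeas : ∀ k n : ℕ, Measurable (X k n))
    (hgauss : ∀ k n : ℕ, 1 ≤ k → 1 ≤ n → Measure.map (X k n) P = gaussianReal 0 1)
    {ε : ℝ} (hε : 0 < ε) :
    ∀ᵐ ω ∂P, ∃ N : ℕ, ∀ m j : ℕ, 1 ≤ m → 1 ≤ j → N ≤ max m j →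
      runMax X m j ω ≤ Real.sqrt (2 * Real.log ((m * j : ℕ) : ℝ)) + ε := by
  classical
  set U : ℕ × ℕ → Set Ω := fun p =>
    ⋃ q ∈ (Finset.Icc 1 (2^(p.1+1)) ×ˢ Finset.Icc 1 (2^(p.2+1))),
      X q.1 q.2 ⁻¹' Ioi (Real.sqrt (2 * Real.log ((2:ℝ)^(p.1+p.2))) + ε) with hU
  have hP : ∀ p : ℕ × ℕ, P (U p) ≤ (if p = (0,0) then 1 else 0)
      + ENNReal.ofReal (4 * rexp (-ε * Real.sqrt ((p.1:ℝ)+p.2))) := by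
    rintro ⟨a, b⟩
    by_cases h00 : (a, b) = ((0:ℕ), (0:ℕ))
    · rw [if_pos h00]
      exact le_trans prob_le_one le_self_add
    · rw [if_neg h00, zero_add]
      have hab : 1 ≤ a + b := by
        rcases Nat.eq_zero_or_pos (a+b) with h | h
        · exact absurd (by
            have ha := Nat.eq_zero_of_add_eq_zero_right h
            have hb := Nat.eq_zero_of_add_eq_zero_left h
            simp [ha, hb]) h00
        · exact h
      set s := Real.sqrt (2 * Real.log ((2:ℝ)^(a+b))) with hsdef
      have hs1 : 1 ≤ s := by
        rw [hsdef]
        rw [show (1:ℝ) = Real.sqrt 1 by simp]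
        apply Real.sqrt_le_sqrt
        rw [Real.log_pow]
        have : (1:ℝ) ≤ (a+b : ℕ) := by exact_mod_cast hab
        nlinarith [log_two_ge]
      have hc1 : 1 ≤ s + ε := by linarith
      calc P (U (a, b))
          ≤ ∑ q ∈ (Finset.Icc 1 (2^(a+1)) ×ˢ Finset.Icc 1 (2^(b+1))),
              P (X q.1 q.2 ⁻¹' Ioi (s + ε)) := by
            rw [hU]
            exact measure_biUnion_finset_le _ _
        _ ≤ ∑ _q ∈ (Finset.Icc 1 (2^(a+1)) ×ˢ Finset.Icc 1 (2^(b+1))),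
              ENNReal.ofReal (rexp (-(s+ε)^2/2)) := by
            apply Finset.sum_le_sum
            rintro ⟨k, n⟩ hq
            rw [Finset.mem_product, Finset.mem_Icc, Finset.mem_Icc] at hq
            rw [prob_map P X hmeas hgauss hq.1.1 hq.2.1 measurableSet_Ioi]
            exact gauss_tail_upper hc1
        _ ≤ ENNReal.ofReal (4 * rexp (-ε * Real.sqrt ((a:ℝ)+b))) := by
            rw [Finset.sum_const, Finset.card_product, Nat.card_Icc, Nat.card_Icc]
            simp only [Nat.add_sub_cancel]
            rw [nsmul_eq_mul]
            have : ((2^(a+1) * 2^(b+1) : ℕ) : ℝ≥0∞)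
                = ENNReal.ofReal ((2:ℝ)^(a+1) * 2^(b+1)) := by
              rw [← ENNReal.ofReal_natCast]
              congr 1
              push_cast
              ring
            rw [this, ← ENNReal.ofReal_mul (by positivity)]
            exact ENNReal.ofReal_le_ofReal (block_bound hε a b hab)
  have hsum : ∑' p : ℕ × ℕ, P (U p) ≠ ⊤ := by
    apply ne_top_of_le_ne_top _ (ENNReal.tsum_le_tsum hP)
    rw [ENNReal.tsum_add]
    apply ENNReal.add_ne_top.2
    constructor
    · rw [tsum_ite_eq]
      exact ENNReal.one_ne_top
    · rw [← ENNReal.ofReal_tsum_of_nonneg (fun p => by positivity)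
        ((summable_exp_sqrt_pair hε).mul_left 4)]
      exact ENNReal.ofReal_ne_top
  filter_upwards [borel_cantelli' P U hsum] with ω hfin
  obtain ⟨M, hM⟩ : ∃ M, ∀ p ∈ {p : ℕ × ℕ | ω ∈ U p}, max p.1 p.2 ≤ M := by
    rcases (hfin.image (fun p => max p.1 p.2)).bddAbove with ⟨M, hM⟩
    exact ⟨M, fun p hp => hM ⟨p, hp, rfl⟩⟩
  refine ⟨2^(M+1), fun m j hm hj hNle => ?_⟩
  set a := Nat.log 2 m with ha
  set b := Nat.log 2 j with hb
  have hma : m ≤ 2^(a+1) := (Nat.lt_pow_succ_log_self (by norm_num) m).le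
  have hjb : j ≤ 2^(b+1) := (Nat.lt_pow_succ_log_self (by norm_num) j).le
  have ham : 2^a ≤ m := Nat.pow_log_le_self 2 (by omega)
  have hbj : 2^b ≤ j := Nat.pow_log_le_self 2 (by omega)
  have hnotbad : (a, b) ∉ {p : ℕ × ℕ | ω ∈ U p} := by
    intro hmem
    have := hM _ hmem
    simp only at this
    have hcases : 2^(M+1) ≤ m ∨ 2^(M+1) ≤ j := by
      rcases max_cases m j with ⟨hh, _⟩ | ⟨hh, _⟩
      · left; omega
      · right; omega
    rcases hcases with hcase | hcase
    · have : M + 1 ≤ a := (Nat.le_log_iff_pow_le (by norm_num) (by omega)).2 hcase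
      omega
    · have : M + 1 ≤ b := (Nat.le_log_iff_pow_le (by norm_num) (by omega)).2 hcase
      omega
  have hbound : ∀ k n, 1 ≤ k → k ≤ m → 1 ≤ n → n ≤ j →
      X k n ω ≤ Real.sqrt (2 * Real.log ((2:ℝ)^(a+b))) + ε := by
    intro k n h1 h2 h3 h4
    by_contra hgt
    push_neg at hgt
    apply hnotbad
    simp only [hU, mem_setOf_eq, mem_iUnion]
    refine ⟨(k, n), ?_, hgt⟩
    rw [Finset.mem_product, Finset.mem_Icc, Finset.mem_Icc]
    exact ⟨⟨h1, le_trans h2 hma⟩, h3, le_trans h4 hjb⟩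
  have hrm : runMax X m j ω ≤ Real.sqrt (2 * Real.log ((2:ℝ)^(a+b))) + ε :=
    (runMax_le_iff X ω hm hj).2 hbound
  refine le_trans hrm ?_
  have hle : Real.sqrt (2 * Real.log ((2:ℝ)^(a+b))) ≤ Real.sqrt (2 * Real.log ((m * j : ℕ) : ℝ)) := by
    apply Real.sqrt_le_sqrt
    have hNat : (2:ℕ)^(a+b) ≤ m * j := by
      rw [pow_add]
      exact Nat.mul_le_mul ham hbj
    have hcast : ((2:ℝ))^(a+b) = (((2:ℕ)^(a+b) : ℕ) : ℝ) := by push_cast; ring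
    have hlog : Real.log ((2:ℝ)^(a+b)) ≤ Real.log ((m * j : ℕ) : ℝ) := by
      apply Real.log_le_log (by positivity)
      rw [hcast]
      exact_mod_cast hNat
    linarith
  linarith
end


section
variable {Ω : Type*} [MeasurableSpace Ω] (P : Measure Ω) [IsProbabilityMeasure P]
  (X : ℕ → ℕ → Ω → ℝ)

lemma as_lower
    (hmeas : ∀ k n : ℕ, Measurable (X k n))
    (hgauss : ∀ k n : ℕ, 1 ≤ k → 1 ≤ n → Measure.map (X k n) P = gaussianReal 0 1)
    (hindep : ProbabilityTheory.iIndepFun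
      (fun p : ℕ × ℕ => X p.1 p.2) P)
    {ε : ℝ} (hε : 0 < ε) :
    ∀ᵐ ω ∂P, ∃ N : ℕ, ∀ m j : ℕ, 1 ≤ m → 1 ≤ j → N ≤ max m j →
      Real.sqrt (2 * Real.log ((m * j : ℕ) : ℝ)) - ε < runMax X m j ω := by
  classical
  obtain ⟨N₀, hN₀2, hN₀⟩ := exp_bound_lower hε
  set E : ℕ × ℕ → Set Ω := fun p =>
    if 1 ≤ p.1 ∧ 1 ≤ p.2 ∧ N₀ ≤ p.1 * p.2 then
      {ω | ∀ k n, 1 ≤ k → k ≤ p.1 → 1 ≤ n → n ≤ p.2 →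
        X k n ω ≤ Real.sqrt (2 * Real.log ((p.1 * p.2 : ℕ) : ℝ)) - ε}
    else ∅ with hE
  have hPE : ∀ p : ℕ × ℕ, P (E p) ≤
      ENNReal.ofReal (16 * (1/((p.1:ℝ)+1)^2 * (1/((p.2:ℝ)+1)^2))) := by
    rintro ⟨m, j⟩
    by_cases hcond : 1 ≤ m ∧ 1 ≤ j ∧ N₀ ≤ m * j
    · rw [hE]
      simp only [if_pos hcond]
      obtain ⟨hm, hj, hmj⟩ := hcond
      obtain ⟨hc1, hexp⟩ := hN₀ (m*j) hmj
      refine le_trans (lower_prob P X hmeas hgauss hindep hm hj hc1) ?_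
      apply ENNReal.ofReal_le_ofReal
      refine le_trans hexp ?_
      have hm1 : (1:ℝ) ≤ m := by exact_mod_cast hm
      have hj1 : (1:ℝ) ≤ j := by exact_mod_cast hj
      have hcast : ((m*j : ℕ) : ℝ) = (m:ℝ) * j := by push_cast; ring
      rw [hcast]
      rw [show 16 * (1/((m:ℝ)+1)^2 * (1/((j:ℝ)+1)^2)) = 16 / (((m:ℝ)+1)^2 * ((j:ℝ)+1)^2) by
        field_simp]
      rw [div_le_div_iff₀ (by positivity) (by positivity)]
      nlinarith [sq_nonneg ((m:ℝ)*j), sq_nonneg ((m:ℝ) - 1), sq_nonneg ((j:ℝ) - 1),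
        mul_pos (show (0:ℝ) < m by linarith) (show (0:ℝ) < j by linarith)]
    · rw [hE]
      simp only [if_neg hcond, measure_empty]
      exact zero_le
  have hsum : ∑' p : ℕ × ℕ, P (E p) ≠ ⊤ := by
    have h0 : Summable (fun p : ℕ × ℕ => (1/((p.1:ℝ)+1)^2) * (1/((p.2:ℝ)+1)^2)) :=
      Summable.mul_of_nonneg (f := fun n : ℕ => 1/((n:ℝ)+1)^2) (g := fun n : ℕ => 1/((n:ℝ)+1)^2)
        summable_inv_sq_add_one summable_inv_sq_add_one
        (fun n => by positivity) (fun n => by positivity)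
    have hsummable : Summable (fun p : ℕ × ℕ => 16 * (1/((p.1:ℝ)+1)^2 * (1/((p.2:ℝ)+1)^2))) :=
      h0.mul_left 16
    have hb : ∑' p : ℕ × ℕ, ENNReal.ofReal (16 * (1/((p.1:ℝ)+1)^2 * (1/((p.2:ℝ)+1)^2))) ≠ ⊤ := by
      rw [← ENNReal.ofReal_tsum_of_nonneg (fun p => by positivity) hsummable]
      exact ENNReal.ofReal_ne_top
    exact ne_top_of_le_ne_top hb (ENNReal.tsum_le_tsum hPE)
  filter_upwards [borel_cantelli' P E hsum] with ω hfin
  obtain ⟨M, hM⟩ : ∃ M, ∀ p ∈ {p : ℕ × ℕ | ω ∈ E p}, max p.1 p.2 ≤ M := by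
    rcases (hfin.image (fun p => max p.1 p.2)).bddAbove with ⟨M, hM⟩
    exact ⟨M, fun p hp => hM ⟨p, hp, rfl⟩⟩
  refine ⟨max (M+1) N₀, fun m j hm hj hNle => ?_⟩
  have hmj : N₀ ≤ m * j := by
    have h1 : max m j ≤ m * j := by
      apply Nat.max_le.2
      constructor
      · calc m = m * 1 := (Nat.mul_one m).symm
          _ ≤ m * j := Nat.mul_le_mul_left m hj
      · calc j = 1 * j := (Nat.one_mul j).symm
          _ ≤ m * j := Nat.mul_le_mul_right j hm
    omega
  have hnotbad : (m, j) ∉ {p : ℕ × ℕ | ω ∈ E p} := by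
    intro hmem
    have := hM _ hmem
    simp only at this
    omega
  rw [mem_setOf_eq, hE] at hnotbad
  simp only [if_pos (⟨hm, hj, hmj⟩ : 1 ≤ m ∧ 1 ≤ j ∧ N₀ ≤ m * j)] at hnotbad
  rw [mem_setOf_eq] at hnotbad
  push_neg at hnotbad
  obtain ⟨k, n, h1, h2, h3, h4, hgt⟩ := hnotbad
  exact lt_of_lt_of_le hgt (le_runMax X ω h1 h2 h3 h4)
end

/-- for a double array of independent standard Gaussian random variables,
`max_{1≤k≤m,1≤n≤j} X_{k,n} - √(2 ln(mj)) → 0` a.s. as `m ∨ j → ∞`. -/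
theorem runMax_gaussian_tendsto_zero
    {Ω : Type*} [MeasurableSpace Ω] (P : Measure Ω) [IsProbabilityMeasure P]
    (X : ℕ → ℕ → Ω → ℝ)
    (hmeas : ∀ k n : ℕ, Measurable (X k n))
    (hgauss : ∀ k n : ℕ, 1 ≤ k → 1 ≤ n →
      Measure.map (X k n) P = ProbabilityTheory.gaussianReal 0 1)
    (hindep : ProbabilityTheory.iIndepFun
      (fun p : ℕ × ℕ => X p.1 p.2) P) :
    ∀ᵐ ω ∂P, TendstoMaxIdx
      (fun m j => runMax X m j ω - Real.sqrt (2 * Real.log ((m * j : ℕ) : ℝ))) 0 := by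
  have main : ∀ q : ℕ, ∀ᵐ ω ∂P, ∃ N : ℕ, ∀ m j : ℕ, 1 ≤ m → 1 ≤ j → N ≤ max m j →
      |runMax X m j ω - Real.sqrt (2 * Real.log ((m * j : ℕ) : ℝ))| < 1/((q:ℝ)+1) := by
    intro q
    have hq : (0:ℝ) < 1/((q:ℝ)+1)/2 := by positivity
    have hq2 : 1/((q:ℝ)+1)/2 < 1/((q:ℝ)+1) := by
      have : (0:ℝ) < 1/((q:ℝ)+1) := by positivity
      linarith
    filter_upwards [as_upper P X hmeas hgauss hq, as_lower P X hmeas hgauss hindep hq]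
      with ω h₁ h₂
    obtain ⟨N₁, hN₁⟩ := h₁
    obtain ⟨N₂, hN₂⟩ := h₂
    refine ⟨max N₁ N₂, fun m j hm hj hN => ?_⟩
    have u := hN₁ m j hm hj (le_trans (le_max_left _ _) hN)
    have l := hN₂ m j hm hj (le_trans (le_max_right _ _) hN)
    rw [abs_lt]
    constructor <;> linarith
  filter_upwards [MeasureTheory.ae_all_iff.2 main] with ω hω
  intro ε hε
  obtain ⟨q, hq⟩ := exists_nat_one_div_lt hε
  obtain ⟨N, hN⟩ := hω q
  refine ⟨N, fun m j hm hj h => ?_⟩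
  have := hN m j hm hj h
  rw [sub_zero]
  calc |runMax X m j ω - Real.sqrt (2 * Real.log ((m * j : ℕ) : ℝ))| < 1/((q:ℝ)+1) := this
    _ < ε := hq
end

section
/- Let θ > 1 and b > 0, and let {X_{k,n} : k,n ≥ 1} be a double array of independent identically distributed reflected Weibull random variables with probability density p(x) = (θ/(2b)) (|x|/b)^{θ−1} exp(−(|x|/b)^θ). Set φ(x) = ((θ−1)/θ) (θ/b^θ)^{1/(θ−1)} |x|^{θ/(θ−1)}, whose Young–Fenchel transform is ψ(x) = (|x|/b)^θ. If the common φ-subgaussian norm of the X_{k,n} satisfies τ_φ(X_{k,n}) ≤ 1, then max_{1 ≤ k ≤ m, 1 ≤ n ≤ j} X_{k,n} − b (ln(mj))^{1/θ} → 0 almost surely as m ∨ j → ∞. -/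
set_option maxHeartbeats 1000000

open MeasureTheory Real Filter Set

lemma aux_bernoulli {θ : ℝ} (hθ : 1 ≤ θ) {a v : ℝ} (ha : 0 ≤ a) (hv : 0 ≤ v) :
    a ^ θ + θ * a ^ (θ - 1) * v ≤ (a + v) ^ θ := by
  rcases eq_or_lt_of_le hv with h | hv
  · simp [← h]
  · have hlt : a < a + v := by linarith
    have hcont : ContinuousOn (fun x : ℝ => x ^ θ) (Set.Icc a (a + v)) := fun x _ =>
      (Real.hasDerivAt_rpow_const (Or.inr hθ)).continuousAt.continuousWithinAt
    obtain ⟨c, hc, hderiv⟩ := exists_hasDerivAt_eq_slope (fun x : ℝ => x ^ θ)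
      (fun x => θ * x ^ (θ - 1)) hlt hcont
      (fun x _ => Real.hasDerivAt_rpow_const (Or.inr hθ))
    have hca : a ≤ c := hc.1.le
    have hmono : a ^ (θ - 1) ≤ c ^ (θ - 1) :=
      Real.rpow_le_rpow ha hca (by linarith)
    have hv' : (0:ℝ) < v := hv
    have : θ * a ^ (θ - 1) * v ≤ θ * c ^ (θ - 1) * v := by
      have hθ0 : (0:ℝ) ≤ θ := by linarith
      exact mul_le_mul_of_nonneg_right (mul_le_mul_of_nonneg_left hmono hθ0) hv'.le
    have hslope : θ * c ^ (θ - 1) = ((a + v) ^ θ - a ^ θ) / (a + v - a) := hderiv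
    rw [show a + v - a = v by ring] at hslope
    have : θ * c ^ (θ - 1) * v = (a + v) ^ θ - a ^ θ := by
      rw [hslope]; field_simp
    linarith


lemma aux_growth (c β M : ℝ) (hc : 0 < c) (hβ : 0 < β) :
    ∃ D : ℝ, 0 ≤ D ∧ ∀ L : ℝ, 0 ≤ L → M * (1 + L) ^ 4 ≤ D + Real.exp (c * L ^ β) := by
  set n : ℕ := ⌈(8:ℝ) / β⌉₊ with hn
  have hnβ : (8:ℝ) ≤ (n:ℝ) * β := by
    have : (8:ℝ) / β ≤ (n:ℝ) := Nat.le_ceil _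
    calc (8:ℝ) = (8/β) * β := by field_simp
    _ ≤ (n:ℝ) * β := by gcongr
  set L₂ : ℝ := max 1 (16 * |M| * (n.factorial : ℝ) / c ^ n) with hL₂
  have hL₂1 : (1:ℝ) ≤ L₂ := le_max_left _ _
  refine ⟨|M| * (1 + L₂) ^ 4, by positivity, fun L hL => ?_⟩
  rcases le_or_gt L L₂ with h | h
  · have h1 : M * (1 + L) ^ 4 ≤ |M| * (1 + L₂) ^ 4 := by
      calc M * (1+L)^4 ≤ |M| * (1+L)^4 :=
            mul_le_mul_of_nonneg_right (le_abs_self M) (by positivity)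
      _ ≤ |M| * (1+L₂)^4 := by gcongr <;> linarith [abs_nonneg M]
    have := Real.exp_pos (c * L ^ β)
    linarith
  · have hL1 : (1:ℝ) ≤ L := le_trans hL₂1 h.le
    have key : |M| * (1 + L) ^ 4 ≤ Real.exp (c * L ^ β) := by
      have hLβ : (0:ℝ) ≤ c * L ^ β := by positivity
      have h2 : (c * L ^ β) ^ n / (n.factorial : ℝ) ≤ Real.exp (c * L ^ β) :=
        Real.pow_div_factorial_le_exp _ hLβ n
      have h3 : (L ^ β) ^ n = L ^ ((n:ℝ) * β) := by
        rw [← Real.rpow_natCast (L ^ β) n, ← Real.rpow_mul hL, mul_comm]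
      have h4 : L ^ ((8:ℝ)) ≤ L ^ ((n:ℝ) * β) :=
        Real.rpow_le_rpow_of_exponent_le hL1 hnβ
      have h5 : L ^ ((8:ℝ)) = (L ^ 4) * (L ^ 4) := by
        rw [show ((8:ℝ)) = ((8:ℕ):ℝ) by norm_num, Real.rpow_natCast]; ring
      have h6 : 16 * |M| * (n.factorial : ℝ) / c ^ n ≤ L := le_trans (le_max_right _ _) h.le
      have h7 : (16 * |M|) * (L ^ 4) ≤ (c ^ n / (n.factorial : ℝ)) * ((L^4) * (L^4)) := by
        have hcn : (0:ℝ) < c ^ n := by positivity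
        have hfac : (0:ℝ) < (n.factorial : ℝ) := by positivity
        have h8 : 16 * |M| ≤ (c ^ n / (n.factorial : ℝ)) * L := by
          rw [div_mul_eq_mul_div, le_div_iff₀ hfac]
          calc 16 * |M| * (n.factorial:ℝ) = (16 * |M| * (n.factorial:ℝ) / c ^ n) * c ^ n := by
                field_simp
          _ ≤ L * c ^ n := by gcongr
          _ = c ^ n * L := by ring
        have hL4 : (0:ℝ) < L ^ 4 := by positivity
        have hLle : L ≤ L ^ 4 := by
          calc L = L ^ 1 := (pow_one L).symm
          _ ≤ L ^ 4 := pow_le_pow_right₀ hL1 (by norm_num)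
        calc (16 * |M|) * L ^ 4 ≤ ((c ^ n / (n.factorial : ℝ)) * L) * L ^ 4 := by gcongr
        _ = (c ^ n / (n.factorial : ℝ)) * (L * L ^ 4) := by ring
        _ ≤ (c ^ n / (n.factorial : ℝ)) * (L ^ 4 * L ^ 4) := by gcongr
      have h9 : (1 + L) ^ 4 ≤ 16 * L ^ 4 := by nlinarith [sq_nonneg L, sq_nonneg (1-L), sq_nonneg ((1+L)^2), sq_nonneg (L^2)]
      calc |M| * (1 + L) ^ 4 ≤ |M| * (16 * L ^ 4) := by gcongr
      _ = (16 * |M|) * L ^ 4 := by ring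
      _ ≤ (c ^ n / (n.factorial : ℝ)) * ((L^4) * (L^4)) := h7
      _ = (c ^ n / (n.factorial : ℝ)) * (L ^ ((8:ℝ))) := by rw [h5]
      _ ≤ (c ^ n / (n.factorial : ℝ)) * (L ^ ((n:ℝ) * β)) := by
            gcongr <;> positivity
      _ = (c * L ^ β) ^ n / (n.factorial : ℝ) := by
            rw [mul_pow, ← h3]; ring
      _ ≤ Real.exp (c * L ^ β) := h2
    have hM : M * (1 + L) ^ 4 ≤ |M| * (1 + L) ^ 4 :=
      mul_le_mul_of_nonneg_right (le_abs_self M) (by positivity)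
    have hD : (0:ℝ) ≤ |M| * (1 + L₂) ^ 4 := by positivity
    linarith

lemma aux_tail_deriv {θ b : ℝ} (hθ : 1 < θ) (hb : 0 < b) {t : ℝ} (ht : 0 < t) :
    HasDerivAt (fun t : ℝ => -(1/2) * Real.exp (-(t/b)^θ))
      (θ / (2*b) * (t/b)^(θ-1) * Real.exp (-(t/b)^θ)) t := by
  have h1 : HasDerivAt (fun t : ℝ => t / b) (1 / b) t := (hasDerivAt_id t).div_const b
  have h2 : HasDerivAt (fun y : ℝ => y ^ θ) (θ * (t/b) ^ (θ-1)) (t/b) :=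
    Real.hasDerivAt_rpow_const (Or.inl (ne_of_gt (div_pos ht hb)))
  have h3 : HasDerivAt (fun t : ℝ => (t/b) ^ θ) (θ * (t/b) ^ (θ-1) * (1/b)) t := by
    have := h2.comp t h1; exact this
  have h4 := ((Real.hasDerivAt_exp (-(t/b)^θ)).comp t h3.neg).const_mul (-(1/2) : ℝ)
  have heq : θ / (2*b) * (t/b)^(θ-1) * Real.exp (-(t/b)^θ)
      = -(1/2 : ℝ) * (Real.exp (-(t/b)^θ) * -(θ * (t/b)^(θ-1) * (1/b))) := by
    field_simp
  rw [heq]; exact h4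

lemma aux_tail_integral {θ b : ℝ} (hθ : 1 < θ) (hb : 0 < b) {x : ℝ} (hx : 0 ≤ x) :
    IntegrableOn (fun t => θ / (2*b) * (t/b)^(θ-1) * Real.exp (-(t/b)^θ)) (Ioi x) ∧
    ∫ t in Ioi x, θ / (2*b) * (t/b)^(θ-1) * Real.exp (-(t/b)^θ)
      = 1/2 * Real.exp (-(x/b)^θ) := by
  have hcont : ContinuousWithinAt (fun t : ℝ => -(1/2) * Real.exp (-(t/b)^θ)) (Ici x) x := by
    apply ContinuousAt.continuousWithinAt
    have : ContinuousAt (fun t : ℝ => (t/b)^θ) x := by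
      apply ContinuousAt.rpow_const (by fun_prop)
      right; positivity
    fun_prop
  have hderiv : ∀ t ∈ Ioi x, HasDerivAt (fun t : ℝ => -(1/2) * Real.exp (-(t/b)^θ))
      (θ / (2*b) * (t/b)^(θ-1) * Real.exp (-(t/b)^θ)) t :=
    fun t ht => aux_tail_deriv hθ hb (lt_of_le_of_lt hx ht)
  have hpos : ∀ t ∈ Ioi x, 0 ≤ θ / (2*b) * (t/b)^(θ-1) * Real.exp (-(t/b)^θ) := by
    intro t ht
    have ht0 : 0 < t := lt_of_le_of_lt hx ht
    have : 0 ≤ (t/b)^(θ-1) := Real.rpow_nonneg (by positivity) _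
    positivity
  have hlim : Tendsto (fun t : ℝ => -(1/2) * Real.exp (-(t/b)^θ)) atTop (nhds 0) := by
    have h1 : Tendsto (fun t : ℝ => t / b) atTop atTop := tendsto_id.atTop_div_const hb
    have h2 : Tendsto (fun t : ℝ => (t/b)^θ) atTop atTop :=
      (tendsto_rpow_atTop (by linarith)).comp h1
    have h3 : Tendsto (fun t : ℝ => Real.exp (-(t/b)^θ)) atTop (nhds 0) :=
      Real.tendsto_exp_atBot.comp (tendsto_neg_atBot_iff.mpr h2)
    have := h3.const_mul (-(1/2) : ℝ)
    simpa using this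
  constructor
  · exact integrableOn_Ioi_deriv_of_nonneg hcont hderiv hpos hlim
  · rw [integral_Ioi_of_hasDerivAt_of_nonneg hcont hderiv hpos hlim]
    ring


lemma aux_pow_clog (m : ℕ) (hm : 1 ≤ m) : (2:ℝ) ^ (Nat.clog 2 m) ≤ 2 * m := by
  rcases eq_or_lt_of_le hm with h | h
  · rw [← h]; simp [Nat.clog_one_right]
  · have h2 : 2 ≤ m := h
    have hlt := Nat.pow_pred_clog_lt_self (b := 2) one_lt_two (by omega : 1 < m)
    have hpos : 1 ≤ Nat.clog 2 m := Nat.clog_pos one_lt_two (by omega)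
    have hN : (2:ℕ) ^ (Nat.clog 2 m) ≤ 2 * m := by
      rw [Nat.pred_eq_sub_one] at hlt
      have heq : (2:ℕ) ^ (Nat.clog 2 m) = 2 * 2 ^ (Nat.clog 2 m - 1) := by
        rw [← pow_succ']
        congr 1
        omega
      omega
    exact_mod_cast hN

theorem main
    {Ω : Type*} [MeasurableSpace Ω] (P : Measure Ω) [IsProbabilityMeasure P]
    (θ b : ℝ) (hθ : 1 < θ) (hb : 0 < b)
    (X : ℕ → ℕ → Ω → ℝ)
    (hmeas : ∀ k n : ℕ, Measurable (X k n))
    (hlaw : ∀ k n : ℕ, 1 ≤ k → 1 ≤ n →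
      Measure.map (X k n) P = MeasureTheory.volume.withDensity (fun x =>
        ENNReal.ofReal (θ / (2 * b) * (|x| / b) ^ (θ - 1) * Real.exp (-(|x| / b) ^ θ))))
    (hindep : ProbabilityTheory.iIndepFun
      (fun p : ℕ × ℕ => X p.1 p.2) P) :
    ∀ᵐ ω ∂P, TendstoMaxIdx
      (fun m j => runMax X m j ω - b * Real.log ((m * j : ℕ) : ℝ) ^ (1 / θ)) 0 := by
  -- tail probability
  have htail : ∀ k n : ℕ, 1 ≤ k → 1 ≤ n → ∀ x : ℝ, 0 ≤ x →
      P {ω | x < X k n ω} = ENNReal.ofReal (1/2 * Real.exp (-(x/b)^θ)) := by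
    intro k n hk hn x hx
    have hmap : P {ω | x < X k n ω} = (Measure.map (X k n) P) (Ioi x) := by
      rw [Measure.map_apply (hmeas k n) measurableSet_Ioi]; rfl
    rw [hmap, hlaw k n hk hn, withDensity_apply _ measurableSet_Ioi]
    have hcongr : ∀ᵐ t ∂(volume.restrict (Ioi x)),
        ENNReal.ofReal (θ / (2*b) * (|t|/b)^(θ-1) * Real.exp (-(|t|/b)^θ))
          = ENNReal.ofReal (θ / (2*b) * (t/b)^(θ-1) * Real.exp (-(t/b)^θ)) := by
      filter_upwards [ae_restrict_mem measurableSet_Ioi] with t ht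
      rw [abs_of_pos (lt_of_le_of_lt hx ht)]
    rw [lintegral_congr_ae hcongr]
    obtain ⟨hint, hval⟩ := aux_tail_integral hθ hb hx
    rw [← ofReal_integral_eq_lintegral_ofReal hint ?_, hval]
    filter_upwards [ae_restrict_mem measurableSet_Ioi] with t ht
    have ht0 : 0 < t := lt_of_le_of_lt hx ht
    have : 0 ≤ (t/b)^(θ-1) := Real.rpow_nonneg (by positivity) _
    positivity
  -- CDF bound
  have hq1 : ∀ x : ℝ, 0 ≤ 1/2 * Real.exp (-(x/b)^θ) := fun x => by positivity
  have hCDF : ∀ k n : ℕ, 1 ≤ k → 1 ≤ n → ∀ x : ℝ,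
      P {ω | X k n ω < x} ≤ ENNReal.ofReal (1 - 1/2 * Real.exp (-((max x 0)/b)^θ)) := by
    intro k n hk hn x
    have hsub : {ω | X k n ω < x} ⊆ {ω | max x 0 < X k n ω}ᶜ := by
      intro ω hω h'
      simp only [mem_setOf_eq, mem_compl_iff] at *
      exact absurd (lt_of_le_of_lt (le_max_left x 0) h') (not_lt.mpr hω.le)
    have hMeas : MeasurableSet {ω | max x 0 < X k n ω} := by
      exact measurableSet_lt measurable_const (hmeas k n)
    calc P {ω | X k n ω < x} ≤ P ({ω | max x 0 < X k n ω}ᶜ) := measure_mono hsub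
    _ = 1 - P {ω | max x 0 < X k n ω} := by
        rw [measure_compl hMeas (measure_ne_top _ _), measure_univ]
    _ = 1 - ENNReal.ofReal (1/2 * Real.exp (-((max x 0)/b)^θ)) := by
        rw [htail k n hk hn _ (le_max_right x 0)]
    _ = ENNReal.ofReal (1 - 1/2 * Real.exp (-((max x 0)/b)^θ)) := by
        rw [ENNReal.ofReal_sub _ (hq1 _), ENNReal.ofReal_one]
  -- finset representation of runMax
  have hSne : ∀ m j : ℕ, 1 ≤ m → 1 ≤ j → (Finset.Icc 1 m ×ˢ Finset.Icc 1 j).Nonempty := by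
    intro m j hm hj
    exact ⟨(1,1), by simp [Finset.mem_product, Finset.mem_Icc, hm, hj]⟩
  have hrep : ∀ m j : ℕ, (hm : 1 ≤ m) → (hj : 1 ≤ j) → ∀ ω,
      runMax X m j ω = (Finset.Icc 1 m ×ˢ Finset.Icc 1 j).sup' (hSne m j hm hj)
        (fun p => X p.1 p.2 ω) := by
    intro m j hm hj ω
    rw [Finset.sup'_eq_csSup_image]
    unfold runMax
    congr 1
    ext y
    simp only [Finset.coe_product, Finset.coe_Icc, mem_image, mem_prod, mem_Icc, mem_setOf_eq,
      Prod.exists]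
    constructor
    · rintro ⟨k, n, h1, h2, h3, h4, rfl⟩; exact ⟨k, n, ⟨⟨h1, h2⟩, ⟨h3, h4⟩⟩, rfl⟩
    · rintro ⟨k, n, ⟨⟨h1, h2⟩, ⟨h3, h4⟩⟩, rfl⟩; exact ⟨k, n, h1, h2, h3, h4, rfl⟩
  -- monotonicity
  have hmono : ∀ m j m' j' : ℕ, (hm : 1 ≤ m) → (hj : 1 ≤ j) → m ≤ m' → j ≤ j' → ∀ ω,
      runMax X m j ω ≤ runMax X m' j' ω := by
    intro m j m' j' hm hj hmm hjj ω
    rw [hrep m j hm hj ω, hrep m' j' (le_trans hm hmm) (le_trans hj hjj) ω]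
    apply Finset.sup'_le
    intro p hp
    simp only [Finset.mem_product, Finset.mem_Icc] at hp
    exact Finset.le_sup' (fun p : ℕ × ℕ => X p.1 p.2 ω)
      (by simp only [Finset.mem_product, Finset.mem_Icc]; omega)
  -- card
  have hcard : ∀ m j : ℕ, (Finset.Icc 1 m ×ˢ Finset.Icc 1 j).card = m * j := by
    intro m j
    rw [Finset.card_product, Nat.card_Icc, Nat.card_Icc]
    simp
  -- union bound
  have hUB : ∀ m j : ℕ, (hm : 1 ≤ m) → (hj : 1 ≤ j) → ∀ x : ℝ, 0 ≤ x →
      P {ω | x < runMax X m j ω} ≤ (m*j : ℕ) * ENNReal.ofReal (1/2 * Real.exp (-(x/b)^θ)) := by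
    intro m j hm hj x hx
    have hset : {ω | x < runMax X m j ω}
        = ⋃ p ∈ (Finset.Icc 1 m ×ˢ Finset.Icc 1 j), {ω | x < X p.1 p.2 ω} := by
      ext ω
      simp only [mem_setOf_eq, mem_iUnion, exists_prop]
      rw [hrep m j hm hj ω, Finset.lt_sup'_iff]
    rw [hset]
    calc P (⋃ p ∈ (Finset.Icc 1 m ×ˢ Finset.Icc 1 j), {ω | x < X p.1 p.2 ω})
        ≤ ∑ p ∈ (Finset.Icc 1 m ×ˢ Finset.Icc 1 j), P {ω | x < X p.1 p.2 ω} :=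
          measure_biUnion_finset_le _ _
    _ = ∑ p ∈ (Finset.Icc 1 m ×ˢ Finset.Icc 1 j),
          ENNReal.ofReal (1/2 * Real.exp (-(x/b)^θ)) := by
          apply Finset.sum_congr rfl
          intro p hp
          simp only [Finset.mem_product, Finset.mem_Icc] at hp
          exact htail p.1 p.2 hp.1.1 hp.2.1 x hx
    _ = (m*j : ℕ) * ENNReal.ofReal (1/2 * Real.exp (-(x/b)^θ)) := by
          rw [Finset.sum_const, hcard m j, nsmul_eq_mul]
  -- product bound
  have hPROD : ∀ m j : ℕ, (hm : 1 ≤ m) → (hj : 1 ≤ j) → ∀ x : ℝ,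
      P {ω | runMax X m j ω < x}
        ≤ ENNReal.ofReal (Real.exp (-((m*j : ℕ) * (1/2 * Real.exp (-((max x 0)/b)^θ))))) := by
    intro m j hm hj x
    set q : ℝ := 1/2 * Real.exp (-((max x 0)/b)^θ) with hqdef
    have hset : {ω | runMax X m j ω < x}
        = ⋂ p ∈ (Finset.Icc 1 m ×ˢ Finset.Icc 1 j), {ω | X p.1 p.2 ω < x} := by
      ext ω
      simp only [mem_setOf_eq, mem_iInter]
      rw [hrep m j hm hj ω, Finset.sup'_lt_iff]
    have hprodeq : P (⋂ p ∈ (Finset.Icc 1 m ×ˢ Finset.Icc 1 j), {ω | X p.1 p.2 ω < x})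
        = ∏ p ∈ (Finset.Icc 1 m ×ˢ Finset.Icc 1 j), P {ω | X p.1 p.2 ω < x} := by
      apply hindep.meas_biInter
      intro p hp
      exact ⟨Iio x, measurableSet_Iio, rfl⟩
    rw [hset, hprodeq]
    calc ∏ p ∈ (Finset.Icc 1 m ×ˢ Finset.Icc 1 j), P {ω | X p.1 p.2 ω < x}
        ≤ ∏ p ∈ (Finset.Icc 1 m ×ˢ Finset.Icc 1 j), ENNReal.ofReal (1 - q) := by
          apply Finset.prod_le_prod'
          intro p hp
          simp only [Finset.mem_product, Finset.mem_Icc] at hp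
          exact hCDF p.1 p.2 hp.1.1 hp.2.1 x
    _ = ENNReal.ofReal (1 - q) ^ (m * j) := by rw [Finset.prod_const, hcard m j]
    _ ≤ ENNReal.ofReal (Real.exp (-q)) ^ (m * j) := by
          gcongr
          have := Real.add_one_le_exp (-q)
          linarith
    _ = ENNReal.ofReal (Real.exp (-q) ^ (m * j)) := by
          rw [ENNReal.ofReal_pow (Real.exp_pos _).le]
    _ = ENNReal.ofReal (Real.exp (-((m*j : ℕ) * q))) := by
          rw [← Real.exp_nat_mul]
          norm_num
  -- parameters
  set β : ℝ := (θ-1)/θ with hβdef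
  have hβ0 : 0 < β := div_pos (by linarith) (by linarith)
  have hθ0 : (0:ℝ) < θ := by linarith
  -- summable helper
  have S1 : Summable (fun i : ℕ => 1/((i:ℝ)+1)^2) := by
    have S0 : Summable (fun i : ℕ => 1/(i:ℝ)^2) :=
      summable_one_div_nat_pow.mpr (by norm_num)
    have := (summable_nat_add_iff 1).mpr S0
    apply this.congr
    intro i
    push_cast
    ring
  -- UPPER BOUND
  have hup : ∀ ε : ℝ, 0 < ε → ∀ᵐ ω ∂P, ∃ N : ℕ, ∀ m j : ℕ, 1 ≤ m → 1 ≤ j →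
      N ≤ max m j → runMax X m j ω - b * Real.log ((m*j : ℕ) : ℝ) ^ (1/θ) ≤ ε := by
    intro ε hε
    set v : ℝ := ε / b with hvdef
    have hv0 : 0 < v := div_pos hε hb
    set A : ℕ × ℕ → ℝ := fun pq => max 0 (((pq.1:ℝ) + (pq.2:ℝ) - 2) * Real.log 2) with hAdef
    have hA0 : ∀ pq, 0 ≤ A pq := fun pq => le_max_left _ _
    set B : ℕ × ℕ → Set Ω := fun pq =>
      {ω | b * (A pq) ^ (1/θ) + ε < runMax X (2^pq.1) (2^pq.2) ω} with hBdef
    -- probability bound for grid events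
    have hPB : ∀ pq : ℕ × ℕ, P (B pq)
        ≤ ENNReal.ofReal (2 * Real.exp (-(θ*v) * (A pq) ^ β)) := by
      intro pq
      obtain ⟨p, q⟩ := pq
      set t : ℝ := b * (A (p,q)) ^ (1/θ) + ε with htdef
      have hApow : 0 ≤ (A (p,q)) ^ (1/θ) := Real.rpow_nonneg (hA0 _) _
      have ht0 : 0 ≤ t := by
        rw [htdef]
        exact add_nonneg (mul_nonneg hb.le hApow) hε.le
      have h1 : P (B (p,q)) ≤ ((2^p * 2^q : ℕ)) * ENNReal.ofReal (1/2 * Real.exp (-(t/b)^θ)) :=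
        hUB (2^p) (2^q) Nat.one_le_two_pow Nat.one_le_two_pow t ht0
      have htb : t / b = (A (p,q)) ^ (1/θ) + v := by
        rw [htdef, hvdef]; field_simp
      have hAθ : ((A (p,q)) ^ (1/θ)) ^ θ = A (p,q) := by
        rw [← Real.rpow_mul (hA0 _), one_div, inv_mul_cancel₀ (ne_of_gt hθ0), Real.rpow_one]
      have hAβ : ((A (p,q)) ^ (1/θ)) ^ (θ-1) = (A (p,q)) ^ β := by
        rw [← Real.rpow_mul (hA0 _), hβdef]
        congr 1
        field_simp
      have h2 : A (p,q) + θ * (A (p,q))^β * v ≤ (t/b)^θ := by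
        rw [htb]
        have := aux_bernoulli (le_of_lt hθ) hApow hv0.le
        rw [hAθ, hAβ] at this
        exact this
      have hAge : ((p:ℝ) + (q:ℝ) - 2) * Real.log 2 ≤ A (p,q) := le_max_right _ _
      have hcast : ((2^p * 2^q : ℕ) : ℝ) = Real.exp (Real.log 2 * ((p:ℝ)+(q:ℝ))) := by
        push_cast
        rw [← Real.rpow_natCast 2 p, ← Real.rpow_natCast 2 q, ← Real.rpow_add two_pos,
          Real.rpow_def_of_pos two_pos]
      have key : ((2^p * 2^q : ℕ) : ℝ) * (1/2 * Real.exp (-(t/b)^θ))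
          ≤ 2 * Real.exp (-(θ*v) * (A (p,q)) ^ β) := by
        have expand : Real.exp (Real.log 2 * ((p:ℝ)+(q:ℝ))) * (1/2 * Real.exp (-(t/b)^θ))
            = 1/2 * Real.exp (Real.log 2 * ((p:ℝ)+(q:ℝ)) + (-(t/b)^θ)) := by
          rw [Real.exp_add]; ring
        rw [hcast, expand]
        have hle : Real.log 2 * ((p:ℝ)+(q:ℝ)) + (-(t/b)^θ)
            ≤ 2 * Real.log 2 + (-(θ*v) * (A (p,q)) ^ β) := by
          nlinarith [h2, hAge]
        calc 1/2 * Real.exp (Real.log 2 * ((p:ℝ)+(q:ℝ)) + (-(t/b)^θ))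
            ≤ 1/2 * Real.exp (2 * Real.log 2 + (-(θ*v) * (A (p,q)) ^ β)) := by
              gcongr
        _ = 2 * Real.exp (-(θ*v) * (A (p,q)) ^ β) := by
              rw [Real.exp_add, show (2:ℝ) * Real.log 2 = Real.log 2 + Real.log 2 by ring,
                Real.exp_add, Real.exp_log two_pos]
              ring
      calc P (B (p,q)) ≤ ((2^p * 2^q : ℕ)) * ENNReal.ofReal (1/2 * Real.exp (-(t/b)^θ)) := h1
      _ = ENNReal.ofReal (((2^p * 2^q : ℕ) : ℝ) * (1/2 * Real.exp (-(t/b)^θ))) := by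
          rw [← ENNReal.ofReal_natCast (2^p*2^q), ← ENNReal.ofReal_mul (Nat.cast_nonneg _)]
      _ ≤ ENNReal.ofReal (2 * Real.exp (-(θ*v) * (A (p,q)) ^ β)) := ENNReal.ofReal_le_ofReal key
    -- summable bound
    obtain ⟨D, hD0, hD⟩ := aux_growth ((θ*v) / 5 ^ β) β 1
      (by positivity) hβ0
    set K : ℝ := max 162 (2*(D+1)) with hKdef
    have hK0 : 0 ≤ K := le_trans (by norm_num) (le_max_left _ _)
    have hgK : ∀ p q : ℕ, 2 * Real.exp (-(θ*v) * (A (p,q)) ^ β)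
        ≤ K * (1/((p:ℝ)+1)^2 * (1/((q:ℝ)+1)^2)) := by
      intro p q
      have hpq1 : (0:ℝ) < ((p:ℝ)+1)^2 * ((q:ℝ)+1)^2 := by positivity
      have hprod : ((p:ℝ)+1)^2 * ((q:ℝ)+1)^2 ≤ (1+((p:ℝ)+(q:ℝ)))^4 := by
        have hp0 : (0:ℝ) ≤ (p:ℝ) := Nat.cast_nonneg p
        have hq0 : (0:ℝ) ≤ (q:ℝ) := Nat.cast_nonneg q
        have h1 : ((p:ℝ)+1)*((q:ℝ)+1) ≤ (1+((p:ℝ)+(q:ℝ)))^2 := by nlinarith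
        have h2 : (((p:ℝ)+1)*((q:ℝ)+1))^2 ≤ ((1+((p:ℝ)+(q:ℝ)))^2)^2 :=
          pow_le_pow_left₀ (by positivity) h1 2
        calc ((p:ℝ)+1)^2 * ((q:ℝ)+1)^2 = (((p:ℝ)+1)*((q:ℝ)+1))^2 := by ring
        _ ≤ ((1+((p:ℝ)+(q:ℝ)))^2)^2 := h2
        _ = (1+((p:ℝ)+(q:ℝ)))^4 := by ring
      rcases le_or_gt (p + q) 2 with hs | hs
      · -- small s : crude bound
        have hexp : Real.exp (-(θ*v) * (A (p,q)) ^ β) ≤ 1 := by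
          apply Real.exp_le_one_iff.mpr
          have h1 : 0 ≤ (A (p,q)) ^ β := Real.rpow_nonneg (hA0 _) _
          have h2 : 0 ≤ (θ*v) * (A (p,q)) ^ β := mul_nonneg (by positivity) h1
          linarith
        have h81 : ((p:ℝ)+1)^2 * ((q:ℝ)+1)^2 ≤ 81 := by
          have hp2 : p ≤ 2 := by omega
          have hq2 : q ≤ 2 := by omega
          have hp3 : (p:ℝ)+1 ≤ 3 := by
            have : (p:ℝ) ≤ 2 := by exact_mod_cast hp2
            linarith
          have hq3 : (q:ℝ)+1 ≤ 3 := by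
            have : (q:ℝ) ≤ 2 := by exact_mod_cast hq2
            linarith
          have h9 : ((p:ℝ)+1)^2 ≤ 9 := by
            have hp0 : (0:ℝ) ≤ (p:ℝ) := Nat.cast_nonneg p
            nlinarith
          have h9' : ((q:ℝ)+1)^2 ≤ 9 := by
            have hq0 : (0:ℝ) ≤ (q:ℝ) := Nat.cast_nonneg q
            nlinarith
          have := mul_le_mul h9 h9' (sq_nonneg ((q:ℝ)+1)) (by norm_num : (0:ℝ) ≤ 9)
          linarith
        rw [div_mul_div_comm, one_mul]
        rw [mul_one_div, le_div_iff₀ hpq1]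
        have hK162 : (162:ℝ) ≤ K := le_max_left _ _
        have hE0 : 0 < Real.exp (-(θ*v) * (A (p,q)) ^ β) := Real.exp_pos _
        have hml : 2 * Real.exp (-(θ*v) * (A (p,q)) ^ β) * (((p:ℝ)+1)^2 * ((q:ℝ)+1)^2)
            ≤ (2*1) * 81 :=
          mul_le_mul (by linarith) h81 hpq1.le (by norm_num)
        linarith
      · -- large s
        have hs3' : (3:ℝ) ≤ (p:ℝ)+(q:ℝ) := by
          have h1 : 3 ≤ p + q := hs
          exact_mod_cast h1
        set s : ℝ := (p:ℝ)+(q:ℝ) with hsdef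
        have hs0 : 0 ≤ s := by positivity
        have hA5 : s/5 ≤ A (p,q) := by
          have hlog : (0.6931471803:ℝ) < Real.log 2 := Real.log_two_gt_d9
          have hs3 : (3:ℝ) ≤ s := hs3'
          have hmm : (s - 2) * 0.6931471803 ≤ (s - 2) * Real.log 2 :=
            mul_le_mul_of_nonneg_left hlog.le (by linarith)
          have : s/5 ≤ (s - 2) * Real.log 2 := by linarith
          exact le_trans this (le_max_right _ _)
        have hAβs : (s/5) ^ β ≤ (A (p,q)) ^ β :=
          Real.rpow_le_rpow (by positivity) hA5 hβ0.le
        have hsplit : (s/5) ^ β = s ^ β / 5 ^ β := Real.div_rpow hs0 (by norm_num : (0:ℝ) ≤ 5) β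
        have hmain : Real.exp (-(θ*v) * (A (p,q)) ^ β) * (1+s)^4 ≤ D + 1 := by
          have h5 : ((θ*v) / 5 ^ β) * s ^ β ≤ (θ*v) * (A (p,q)) ^ β := by
            have heq : ((θ*v) / 5 ^ β) * s ^ β = (θ*v) * ((s/5) ^ β) := by
              rw [hsplit]; ring
            rw [heq]
            exact mul_le_mul_of_nonneg_left hAβs (by positivity)
          have h6 := hD s hs0
          have h7 : Real.exp (-(θ*v) * (A (p,q)) ^ β) ≤ Real.exp (-(((θ*v) / 5 ^ β) * s ^ β)) := by
            apply Real.exp_le_exp.mpr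
            linarith
          have h8 : Real.exp (-(((θ*v) / 5 ^ β) * s ^ β)) * (1+s)^4 ≤ D + 1 := by
            have hE0 : (0:ℝ) < Real.exp (((θ*v) / 5 ^ β) * s ^ β) := Real.exp_pos _
            have hE1 : (1:ℝ) ≤ Real.exp (((θ*v) / 5 ^ β) * s ^ β) :=
              Real.one_le_exp (by positivity)
            have hEb : (1+s)^4 ≤ D + Real.exp (((θ*v) / 5 ^ β) * s ^ β) := by
              have := h6; linarith
            rw [Real.exp_neg, inv_mul_le_iff₀ hE0]
            nlinarith [mul_nonneg (by linarith : (0:ℝ) ≤ Real.exp (((θ*v) / 5 ^ β) * s ^ β) - 1) hD0]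
          calc Real.exp (-(θ*v) * (A (p,q)) ^ β) * (1+s)^4
              ≤ Real.exp (-(((θ*v) / 5 ^ β) * s ^ β)) * (1+s)^4 := by
                apply mul_le_mul_of_nonneg_right h7 (by positivity)
          _ ≤ D + 1 := h8
        rw [div_mul_div_comm, one_mul, mul_one_div, le_div_iff₀ hpq1]
        have hKD : 2*(D+1) ≤ K := le_max_right _ _
        have hEpos : 0 < Real.exp (-(θ*v) * (A (p,q)) ^ β) := Real.exp_pos _
        calc 2 * Real.exp (-(θ*v) * (A (p,q)) ^ β) * (((p:ℝ)+1)^2 * ((q:ℝ)+1)^2)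
            ≤ 2 * Real.exp (-(θ*v) * (A (p,q)) ^ β) * (1+s)^4 := by
              apply mul_le_mul_of_nonneg_left hprod (by positivity)
        _ = 2 * (Real.exp (-(θ*v) * (A (p,q)) ^ β) * (1+s)^4) := by ring
        _ ≤ 2 * (D+1) := by linarith
        _ ≤ K := hKD
    -- Borel-Cantelli
    have hsum : ∑' pq : ℕ × ℕ, P (B pq) ≠ ⊤ := by
      have hgsum : Summable (fun pq : ℕ × ℕ => K * (1/((pq.1:ℝ)+1)^2 * (1/((pq.2:ℝ)+1)^2))) :=
        ((S1.mul_of_nonneg S1 (fun i => by positivity) (fun i => by positivity)).mul_left K)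
      have h1 : ∑' pq : ℕ × ℕ, P (B pq)
          ≤ ∑' pq : ℕ × ℕ, ENNReal.ofReal (K * (1/((pq.1:ℝ)+1)^2 * (1/((pq.2:ℝ)+1)^2))) := by
        apply ENNReal.tsum_le_tsum
        intro pq
        exact le_trans (hPB pq) (ENNReal.ofReal_le_ofReal (hgK pq.1 pq.2))
      rw [← ENNReal.ofReal_tsum_of_nonneg (fun pq => by positivity) hgsum] at h1
      exact ne_of_lt (lt_of_le_of_lt h1 ENNReal.ofReal_lt_top)
    filter_upwards [MeasureTheory.ae_finite_setOf_mem hsum] with ω hfin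
    obtain ⟨Q, hQ⟩ := ((hfin.image (fun i : ℕ × ℕ => max i.1 i.2)).bddAbove)
    refine ⟨2^(Q+1), fun m j hm hj hN => ?_⟩
    set p := Nat.clog 2 m with hpdef
    set q := Nat.clog 2 j with hqdef
    have hnot : ω ∉ B (p, q) := by
      intro hmem
      have : max p q ≤ Q := hQ (mem_image_of_mem (fun i : ℕ × ℕ => max i.1 i.2)
        (show (p,q) ∈ {i : ℕ × ℕ | ω ∈ B i} from hmem))
      have hclog : Q + 1 ≤ max p q := by
        have h1 : Q + 1 = Nat.clog 2 (2^(Q+1)) := (Nat.clog_pow 2 (Q+1) one_lt_two).symm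
        rcases max_cases m j with ⟨hmax, _⟩ | ⟨hmax, _⟩
        · calc Q + 1 = Nat.clog 2 (2^(Q+1)) := h1
          _ ≤ Nat.clog 2 (max m j) := Nat.clog_mono_right 2 hN
          _ = p := by rw [hmax]
          _ ≤ max p q := le_max_left _ _
        · calc Q + 1 = Nat.clog 2 (2^(Q+1)) := h1
          _ ≤ Nat.clog 2 (max m j) := Nat.clog_mono_right 2 hN
          _ = q := by rw [hmax]
          _ ≤ max p q := le_max_right _ _
      omega
    have hle : runMax X (2^p) (2^q) ω ≤ b * (A (p,q)) ^ (1/θ) + ε := not_lt.mp hnot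
    have hmle : runMax X m j ω ≤ runMax X (2^p) (2^q) ω :=
      hmono m j (2^p) (2^q) hm hj (Nat.le_pow_clog one_lt_two m) (Nat.le_pow_clog one_lt_two j) ω
    have hAlog : A (p,q) ≤ Real.log ((m*j : ℕ) : ℝ) := by
      have hmj1 : (1:ℝ) ≤ ((m*j : ℕ) : ℝ) := by
        have : 1 ≤ m*j := Nat.one_le_iff_ne_zero.mpr (by positivity)
        exact_mod_cast this
      have hlog0 : 0 ≤ Real.log ((m*j : ℕ) : ℝ) := Real.log_nonneg hmj1
      apply max_le hlog0
      have h2p : (2:ℝ)^p ≤ 2*m := aux_pow_clog m hm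
      have h2q : (2:ℝ)^q ≤ 2*j := aux_pow_clog j hj
      have hmj0 : (0:ℝ) < (m:ℝ)*(j:ℝ) := by
        have hm0 : (0:ℝ) < m := by exact_mod_cast hm
        have hj0 : (0:ℝ) < j := by exact_mod_cast hj
        positivity
      have hlogle : ((p:ℝ)+(q:ℝ)) * Real.log 2 ≤ Real.log 4 + Real.log ((m:ℝ)*(j:ℝ)) := by
        have h1 : (2:ℝ)^(p+q) ≤ 4*((m:ℝ)*(j:ℝ)) := by
          rw [pow_add]
          calc (2:ℝ)^p * (2:ℝ)^q ≤ (2*m) * (2*j) := by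
                apply mul_le_mul h2p h2q (by positivity) (by linarith [h2p])
          _ = 4*((m:ℝ)*(j:ℝ)) := by ring
        have h2 : Real.log ((2:ℝ)^(p+q)) ≤ Real.log (4*((m:ℝ)*(j:ℝ))) :=
          Real.log_le_log (by positivity) h1
        rw [Real.log_pow, Real.log_mul (by norm_num) (ne_of_gt hmj0)] at h2
        push_cast at h2
        linarith
      have hlog4 : Real.log (4:ℝ) = 2 * Real.log 2 := by
        rw [show (4:ℝ) = 2^2 by norm_num, Real.log_pow]
        push_cast; ring
      have hcast2 : Real.log ((m*j : ℕ) : ℝ) = Real.log ((m:ℝ)*(j:ℝ)) := by push_cast; rfl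
      rw [hcast2]
      nlinarith [hlogle, hlog4, Real.log_two_gt_d9]
    have hrpow : b * (A (p,q)) ^ (1/θ) ≤ b * (Real.log ((m*j : ℕ) : ℝ)) ^ (1/θ) := by
      apply mul_le_mul_of_nonneg_left _ hb.le
      exact Real.rpow_le_rpow (hA0 _) hAlog (by positivity)
    linarith
  -- LOWER BOUND
  have hlo : ∀ ε : ℝ, 0 < ε → ∀ᵐ ω ∂P, ∃ N : ℕ, ∀ m j : ℕ, 1 ≤ m → 1 ≤ j →
      N ≤ max m j → -ε ≤ runMax X m j ω - b * Real.log ((m*j : ℕ) : ℝ) ^ (1/θ) := by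
    intro ε hε
    set v : ℝ := ε / b with hvdef
    have hv0 : 0 < v := div_pos hε hb
    set C : ℕ × ℕ → Set Ω := fun mj =>
      {ω | (1 ≤ mj.1 ∧ 1 ≤ mj.2) ∧
        runMax X mj.1 mj.2 ω < b * Real.log ((mj.1*mj.2 : ℕ) : ℝ) ^ (1/θ) - ε} with hCdef
    obtain ⟨D, hD0, hD⟩ := aux_growth ((θ*v) / 2 ^ (θ-1)) β 8 (by positivity) hβ0
    set K : ℝ := max (Real.exp (D/2)) (Real.exp (2*(2*v)^θ)) with hKdef
    have hK0 : 0 ≤ K := le_trans (Real.exp_pos _).le (le_max_left _ _)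
    have hreal : ∀ m j : ℕ, 1 ≤ m → 1 ≤ j →
        Real.exp (-(((m*j : ℕ):ℝ) *
          (1/2 * Real.exp (-((max (b * Real.log ((m*j : ℕ) : ℝ) ^ (1/θ) - ε) 0)/b)^θ))))
        ≤ K * (1/(m:ℝ)^2 * (1/(j:ℝ)^2)) := by
      intro m j hm hj
      set Nr : ℝ := ((m*j : ℕ):ℝ) with hNrdef
      have hNr1 : (1:ℝ) ≤ Nr := by
        rw [hNrdef]
        exact_mod_cast Nat.one_le_iff_ne_zero.mpr (Nat.mul_ne_zero (by omega) (by omega))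
      have hNr0 : (0:ℝ) < Nr := lt_of_lt_of_le zero_lt_one hNr1
      set L : ℝ := Real.log Nr with hLdef
      have hL0 : 0 ≤ L := Real.log_nonneg hNr1
      have hexpL : Real.exp L = Nr := Real.exp_log hNr0
      have hNrinv : 1/(m:ℝ)^2 * (1/(j:ℝ)^2) = 1/Nr^2 := by
        rw [hNrdef]
        have hm0 : ((m:ℝ)) ≠ 0 := by
          have : (1:ℝ) ≤ (m:ℝ) := by exact_mod_cast hm
          linarith
        have hj0 : ((j:ℝ)) ≠ 0 := by
          have : (1:ℝ) ≤ (j:ℝ) := by exact_mod_cast hj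
          linarith
        push_cast
        field_simp
      rw [hNrinv]
      rcases le_or_gt ((2*v)^θ) L with hc | hc
      · -- main case
        have h2v0 : (0:ℝ) ≤ 2*v := by linarith
        have h2v : 2*v ≤ L^(1/θ) := by
          have h1 := Real.rpow_le_rpow (Real.rpow_nonneg h2v0 θ) hc
            (by positivity : (0:ℝ) ≤ 1/θ)
          rwa [← Real.rpow_mul h2v0, mul_one_div, div_self (ne_of_gt hθ0),
            Real.rpow_one] at h1
        have hLpow0 : 0 ≤ L^(1/θ) := Real.rpow_nonneg hL0 _
        have hεbv : ε = b * v := by rw [hvdef]; field_simp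
        have hx0 : 0 ≤ b * L^(1/θ) - ε := by nlinarith
        rw [max_eq_left hx0]
        have hxb : (b * L^(1/θ) - ε)/b = L^(1/θ) - v := by
          rw [hεbv]; field_simp
        rw [hxb]
        set a : ℝ := L^(1/θ) - v with hadef
        have hav : v ≤ a := by rw [hadef]; linarith
        have ha0 : 0 ≤ a := le_trans hv0.le hav
        have hbern := aux_bernoulli hθ.le ha0 hv0.le
        have hav' : a + v = L^(1/θ) := by rw [hadef]; ring
        have hLθ : (L^(1/θ))^θ = L := by
          rw [← Real.rpow_mul hL0, one_div, inv_mul_cancel₀ (ne_of_gt hθ0), Real.rpow_one]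
        rw [hav', hLθ] at hbern
        have ha2 : L^(1/θ)/2 ≤ a := by rw [hadef]; linarith
        have haβ : L^β/2^(θ-1) ≤ a^(θ-1) := by
          have h1 : (L^(1/θ)/2)^(θ-1) ≤ a^(θ-1) :=
            Real.rpow_le_rpow (by positivity) ha2 (by linarith)
          have h2 : (L^(1/θ)/2)^(θ-1) = (L^(1/θ))^(θ-1) / 2^(θ-1) :=
            Real.div_rpow hLpow0 (by norm_num) _
          have h3 : (L^(1/θ))^(θ-1) = L^β := by
            rw [← Real.rpow_mul hL0, hβdef]
            congr 1
            field_simp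
          rw [h2, h3] at h1
          exact h1
        have haθle : a^θ ≤ L - ((θ*v)/2^(θ-1)) * L^β := by
          have h1 : ((θ*v)/2^(θ-1)) * L^β ≤ θ * a^(θ-1) * v := by
            calc ((θ*v)/2^(θ-1)) * L^β = (θ*v) * (L^β/2^(θ-1)) := by ring
            _ ≤ (θ*v) * a^(θ-1) := mul_le_mul_of_nonneg_left haβ (by positivity)
            _ = θ * a^(θ-1) * v := by ring
          linarith
        have hEL : Real.exp (-L) = 1/Nr := by
          rw [Real.exp_neg, hexpL, one_div]
        have hNq : 2*L - D/2 ≤ Nr * (1/2 * Real.exp (-a^θ)) := by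
          have h1 : Real.exp (-L + ((θ*v)/2^(θ-1)) * L^β) ≤ Real.exp (-a^θ) :=
            Real.exp_le_exp.mpr (by linarith)
          have h2 : Real.exp (-L + ((θ*v)/2^(θ-1)) * L^β)
              = (1/Nr) * Real.exp (((θ*v)/2^(θ-1)) * L^β) := by
            rw [Real.exp_add, hEL]
          have h3 := hD L hL0
          have h4 : L ≤ (1+L)^4 := by nlinarith [sq_nonneg L, sq_nonneg (1+L), sq_nonneg ((1+L)^2)]
          calc 2*L - D/2 ≤ (1/2) * (8*(1+L)^4 - D) := by nlinarith
          _ ≤ (1/2) * Real.exp (((θ*v)/2^(θ-1)) * L^β) := by nlinarith [h3]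
          _ = Nr * (1/2 * ((1/Nr) * Real.exp (((θ*v)/2^(θ-1)) * L^β))) := by
              field_simp
          _ = Nr * (1/2 * Real.exp (-L + ((θ*v)/2^(θ-1)) * L^β)) := by rw [h2]
          _ ≤ Nr * (1/2 * Real.exp (-a^θ)) := by gcongr
        calc Real.exp (-(Nr * (1/2 * Real.exp (-a^θ)))) ≤ Real.exp (-(2*L - D/2)) :=
              Real.exp_le_exp.mpr (by linarith)
        _ = Real.exp (D/2) * (1/Nr^2) := by
              rw [show -(2*L - D/2) = D/2 + (-(L+L)) by ring, Real.exp_add, Real.exp_neg,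
                Real.exp_add, hexpL]
              ring
        _ ≤ K * (1/Nr^2) := by
              apply mul_le_mul_of_nonneg_right (le_max_left _ _) (by positivity)
      · -- small case
        have hq0 : 0 ≤ Nr * (1/2 * Real.exp (-((max (b * L^(1/θ) - ε) 0)/b)^θ)) := by positivity
        have h1 : Real.exp (-(Nr * (1/2 * Real.exp (-((max (b * L^(1/θ) - ε) 0)/b)^θ)))) ≤ 1 :=
          Real.exp_le_one_iff.mpr (by linarith)
        have hNrK : Nr^2 ≤ K := by
          have h2 : Nr^2 = Real.exp (2*L) := by
            rw [show (2:ℝ)*L = L + L by ring, Real.exp_add, hexpL]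
            ring
          rw [h2]
          calc Real.exp (2*L) ≤ Real.exp (2*(2*v)^θ) :=
                Real.exp_le_exp.mpr (by linarith)
          _ ≤ K := le_max_right _ _
        have h3 : (1:ℝ) ≤ K * (1/Nr^2) := by
          rw [mul_one_div, le_div_iff₀ (by positivity)]
          linarith
        linarith
    -- measure bound for events
    have hPC : ∀ mj : ℕ × ℕ, P (C mj)
        ≤ ENNReal.ofReal (K * (1/(mj.1:ℝ)^2 * (1/(mj.2:ℝ)^2))) := by
      intro mj
      obtain ⟨m, j⟩ := mj
      by_cases hmj : 1 ≤ m ∧ 1 ≤ j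
      · obtain ⟨hm, hj⟩ := hmj
        have hsub : C (m,j) ⊆ {ω | runMax X m j ω < b * Real.log ((m*j : ℕ) : ℝ) ^ (1/θ) - ε} :=
          fun ω hω => hω.2
        calc P (C (m,j)) ≤ P {ω | runMax X m j ω < b * Real.log ((m*j : ℕ) : ℝ) ^ (1/θ) - ε} :=
              measure_mono hsub
        _ ≤ ENNReal.ofReal (Real.exp (-(((m*j : ℕ):ℝ) *
              (1/2 * Real.exp (-((max (b * Real.log ((m*j : ℕ) : ℝ) ^ (1/θ) - ε) 0)/b)^θ))))) :=
              hPROD m j hm hj _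
        _ ≤ ENNReal.ofReal (K * (1/(m:ℝ)^2 * (1/(j:ℝ)^2))) :=
              ENNReal.ofReal_le_ofReal (hreal m j hm hj)
      · have hempty : C (m,j) = ∅ := by
          ext ω
          simp only [hCdef, mem_setOf_eq, mem_empty_iff_false, iff_false]
          tauto
        rw [hempty]
        simp
    -- Borel-Cantelli
    have hsum : ∑' mj : ℕ × ℕ, P (C mj) ≠ ⊤ := by
      have S2 : Summable (fun i : ℕ => 1/(i:ℝ)^2) :=
        summable_one_div_nat_pow.mpr (by norm_num)
      have hgsum : Summable (fun mj : ℕ × ℕ => K * (1/(mj.1:ℝ)^2 * (1/(mj.2:ℝ)^2))) :=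
        ((S2.mul_of_nonneg S2 (fun i => by positivity) (fun i => by positivity)).mul_left K)
      have h1 : ∑' mj : ℕ × ℕ, P (C mj)
          ≤ ∑' mj : ℕ × ℕ, ENNReal.ofReal (K * (1/(mj.1:ℝ)^2 * (1/(mj.2:ℝ)^2))) :=
        ENNReal.tsum_le_tsum hPC
      rw [← ENNReal.ofReal_tsum_of_nonneg (fun mj => by positivity) hgsum] at h1
      exact ne_of_lt (lt_of_le_of_lt h1 ENNReal.ofReal_lt_top)
    filter_upwards [MeasureTheory.ae_finite_setOf_mem hsum] with ω hfin
    obtain ⟨Q, hQ⟩ := ((hfin.image (fun i : ℕ × ℕ => max i.1 i.2)).bddAbove)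
    refine ⟨Q+1, fun m j hm hj hN => ?_⟩
    have hnot : ω ∉ C (m, j) := by
      intro hmem
      have : max m j ≤ Q := hQ (mem_image_of_mem (fun i : ℕ × ℕ => max i.1 i.2)
        (show (m,j) ∈ {i : ℕ × ℕ | ω ∈ C i} from hmem))
      omega
    have : ¬ ((1 ≤ m ∧ 1 ≤ j) ∧
        runMax X m j ω < b * Real.log ((m*j : ℕ) : ℝ) ^ (1/θ) - ε) := hnot
    push_neg at this
    have h2 := this ⟨hm, hj⟩
    linarith
  -- ASSEMBLY
  have hcomb : ∀ᵐ ω ∂P, ∀ r : ℕ,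
      (∃ N : ℕ, ∀ m j : ℕ, 1 ≤ m → 1 ≤ j → N ≤ max m j →
        runMax X m j ω - b * Real.log ((m*j : ℕ) : ℝ) ^ (1/θ) ≤ 1/((r:ℝ)+1)) ∧
      (∃ N : ℕ, ∀ m j : ℕ, 1 ≤ m → 1 ≤ j → N ≤ max m j →
        -(1/((r:ℝ)+1)) ≤ runMax X m j ω - b * Real.log ((m*j : ℕ) : ℝ) ^ (1/θ)) := by
    rw [ae_all_iff]
    intro r
    have hr0 : (0:ℝ) < 1/((r:ℝ)+1) := by positivity
    exact (hup _ hr0).and (hlo _ hr0)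
  filter_upwards [hcomb] with ω hω
  intro ε hε
  obtain ⟨r, hr⟩ := exists_nat_one_div_lt hε
  obtain ⟨⟨N₁, hN₁⟩, ⟨N₂, hN₂⟩⟩ := hω r
  refine ⟨max N₁ N₂, fun m j hm hj hN => ?_⟩
  have hu := hN₁ m j hm hj (le_trans (le_max_left _ _) hN)
  have hl := hN₂ m j hm hj (le_trans (le_max_right _ _) hN)
  rw [sub_zero]
  have habs : |runMax X m j ω - b * Real.log ((m*j : ℕ) : ℝ) ^ (1/θ)| ≤ 1/((r:ℝ)+1) :=
    abs_le.mpr ⟨hl, hu⟩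
  calc |runMax X m j ω - b * Real.log ((m*j : ℕ) : ℝ) ^ (1/θ)| ≤ 1/((r:ℝ)+1) := habs
  _ < ε := hr

/-- Example 2: for a double array of i.i.d. reflected Weibull random
variables with parameters `θ > 1`, `b > 0`, if their common `φ`-subgaussian norm (for
`φ(x) = ((θ-1)/θ) (θ/b^θ)^{1/(θ-1)} |x|^{θ/(θ-1)}`, whose Young–Fenchel transform is
`ψ(x) = (|x|/b)^θ`) is at most `1`, then
`max_{1≤k≤m,1≤n≤j} X_{k,n} - b (ln(mj))^{1/θ} → 0` a.s. as `m ∨ j → ∞`. -/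
theorem runMax_reflectedWeibull_tendsto_zero
    {Ω : Type*} [MeasurableSpace Ω] (P : Measure Ω) [IsProbabilityMeasure P]
    (θ b : ℝ) (hθ : 1 < θ) (hb : 0 < b)
    (X : ℕ → ℕ → Ω → ℝ)
    (hmeas : ∀ k n : ℕ, Measurable (X k n))
    -- the `X k n` are identically distributed with the reflected Weibull density
    -- `p(x) = (θ/(2b)) (|x|/b)^{θ-1} exp(-(|x|/b)^θ)`:
    (hlaw : ∀ k n : ℕ, 1 ≤ k → 1 ≤ n →
      Measure.map (X k n) P = MeasureTheory.volume.withDensity (fun x =>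
        ENNReal.ofReal (θ / (2 * b) * (|x| / b) ^ (θ - 1) * Real.exp (-(|x| / b) ^ θ))))
    (hindep : ProbabilityTheory.iIndepFun
      (fun p : ℕ × ℕ => X p.1 p.2) P)
    -- the common `φ`-subgaussian norm is at most `1`:
    (hsub : ∀ k n : ℕ, 1 ≤ k → 1 ≤ n → IsPhiSubGaussian
      (fun x => (θ - 1) / θ * (θ / b ^ θ) ^ (1 / (θ - 1)) * |x| ^ (θ / (θ - 1))) P (X k n))
    (hτ : ∀ k n : ℕ, 1 ≤ k → 1 ≤ n → tauPhi
      (fun x => (θ - 1) / θ * (θ / b ^ θ) ^ (1 / (θ - 1)) * |x| ^ (θ / (θ - 1))) P (X k n)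
        ≤ 1) :
    ∀ᵐ ω ∂P, TendstoMaxIdx
      (fun m j => runMax X m j ω - b * Real.log ((m * j : ℕ) : ℝ) ^ (1 / θ)) 0 :=
  main P θ b hθ hb X hmeas hlaw hindep
end
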